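/- arXiv:2006.15215 — 3 statements merged into one kernel-verified Lean document; each statement's English description precedes it below -/
import Mathlib

section
/- For any weighted graph G: (i) the derivative of the matching polynomial satisfies μ(G)'(x) = Σ_{j=1}^{n} μ(G∖j)(x); (ii) for every vertex i, the derivative of the rational function α_i(G) = μ(G)/μ(G∖i) satisfies α_i(G)'(x) = 1 + Σ_{j ≠ i} Σ_{c ∈ [i→j]} λ_c · (μ(G∖c)(x)/μ(G∖i)(x))² as an identity of rational functions. -/
open Polynomial
open scoped Classical

/-- A matching of the weighted graph with edge weights `lam`, inside the vertex set `A`: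
a set of pairs `(j,k)` with `j < k`, `lam j k ≠ 0`, endpoints in `A`,
no two pairs sharing a vertex. -/
def IsMatching {n : ℕ} (lam : Fin n → Fin n → ℝ) (A : Finset (Fin n))
    (M : Finset (Fin n × Fin n)) : Prop :=
  (∀ e ∈ M, e.1 < e.2 ∧ lam e.1 e.2 ≠ 0 ∧ e.1 ∈ A ∧ e.2 ∈ A) ∧
  ∀ e ∈ M, ∀ f ∈ M, e ≠ f → e.1 ≠ f.1 ∧ e.1 ≠ f.2 ∧ e.2 ≠ f.1 ∧ e.2 ≠ f.2

/-- The vertices covered by a matching. -/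
def mVerts {n : ℕ} (M : Finset (Fin n × Fin n)) : Finset (Fin n) :=
  M.image Prod.fst ∪ M.image Prod.snd

/-- The finite set of matchings inside the vertex set `A`. -/
noncomputable def matchings {n : ℕ} (lam : Fin n → Fin n → ℝ) (A : Finset (Fin n)) :
    Finset (Finset (Fin n × Fin n)) :=
  Finset.univ.filter fun M => IsMatching lam A M

/-- The weighted matching polynomial of the induced weighted subgraph on the vertex set `A`
(the matching polynomial of the empty graph is `1`). -/
noncomputable def mu {n : ℕ} (r : Fin n → ℝ) (lam : Fin n → Fin n → ℝ)
    (A : Finset (Fin n)) : Polynomial ℝ :=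
  ∑ M ∈ matchings lam A,
    (∏ i ∈ A \ mVerts M, (X - C (r i))) * C (∏ e ∈ M, lam e.1 e.2)

/-- The multivariate matching polynomial evaluated at the complex numbers `x 1, …, x n`. -/
noncomputable def muC {n : ℕ} (lam : Fin n → Fin n → ℝ) (x : Fin n → ℂ) : ℂ :=
  ∑ M ∈ matchings lam (Finset.univ : Finset (Fin n)),
    (∏ i ∈ Finset.univ \ mVerts M, x i) * ∏ e ∈ M, (lam e.1 e.2 : ℂ)

/-- The constant `B_G`: for `n ≥ 3` the maximum over vertices `j` and sets
`A ⊆ [n] ∖ {j}` with `|A| = n - 2` of `∑_{k ∈ A} (-λ_{jk})`; `-λ_{12}/4` for `n = 2`;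
`0` for `n = 1`. -/
noncomputable def BG (n : ℕ) (lam : Fin n → Fin n → ℝ) : ℝ :=
  if 3 ≤ n then
    sSup {S : ℝ | ∃ j : Fin n, ∃ A : Finset (Fin n),
      j ∉ A ∧ A.card = n - 2 ∧ S = ∑ k ∈ A, -lam j k}
  else if h : n = 2 then -lam ⟨0, by omega⟩ ⟨1, by omega⟩ / 4
  else 0

/-- `l` is a path from `i` to `j` inside the vertex set `A`: a nonempty list of distinct
vertices of `A`, starting at `i`, ending at `j`, with consecutive vertices joined by
edges of nonzero weight. -/
def IsPathIn {n : ℕ} (lam : Fin n → Fin n → ℝ) (A : Finset (Fin n)) (i j : Fin n)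
    (l : List (Fin n)) : Prop :=
  l ≠ [] ∧ l.Nodup ∧ (∀ v ∈ l, v ∈ A) ∧ l.head? = some i ∧ l.getLast? = some j ∧
    l.Chain' fun u v => lam u v ≠ 0

/-- `λ_c`: the product of `-λ_e` over the edges `e` of the path `c` (equal to `1` for a
trivial path). -/
def pathWeight {n : ℕ} (lam : Fin n → Fin n → ℝ) (l : List (Fin n)) : ℝ :=
  ((l.zip l.tail).map fun p => -lam p.1 p.2).prod

/-- A real polynomial viewed as a rational function. -/
noncomputable def toRF (p : Polynomial ℝ) : RatFunc ℝ :=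
  algebraMap (Polynomial ℝ) (RatFunc ℝ) p

/-- The graph continued fraction `α_v = μ(A)/μ(A ∖ v)` as a rational function. -/
noncomputable def alpha {n : ℕ} (r : Fin n → ℝ) (lam : Fin n → Fin n → ℝ) (v : Fin n)
    (A : Finset (Fin n)) : RatFunc ℝ :=
  toRF (mu r lam A) / toRF (mu r lam (A.erase v))

/-- `λ_{i∼j} = -(∑_{c ∈ [i→j]} λ_c · μ(A∖c)²) / μ(A∖{i,j})²` as a rational function. -/
noncomputable def lamSim {n : ℕ} (r : Fin n → ℝ) (lam : Fin n → Fin n → ℝ) (i j : Fin n)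
    (A : Finset (Fin n)) : RatFunc ℝ :=
  -(∑ᶠ l ∈ {l : List (Fin n) | IsPathIn lam A i j l},
      toRF (C (pathWeight lam l) * mu r lam (A \ l.toFinset) ^ 2)) /
    toRF (mu r lam ((A.erase i).erase j)) ^ 2

/-- The value of a rational function at `θ`, taken after cancelling common factors;
`none` encodes the value `∞` (a pole). -/
noncomputable def valAt (f : RatFunc ℝ) (θ : ℝ) : Option ℝ :=
  if f.denom.eval θ = 0 then none else some (f.num.eval θ / f.denom.eval θ)

/-- The set `0_{θ,A}` of θ-essential vertices: `m_θ(A∖v) = m_θ(A) - 1`. -/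
def zeroSet {n : ℕ} (r : Fin n → ℝ) (lam : Fin n → Fin n → ℝ) (θ : ℝ)
    (A : Finset (Fin n)) : Set (Fin n) :=
  {v | v ∈ A ∧
    (mu r lam A).rootMultiplicity θ = (mu r lam (A.erase v)).rootMultiplicity θ + 1}

/-- The set `∞_{θ,A}`: `m_θ(A∖v) = m_θ(A) + 1`. -/
def infSet {n : ℕ} (r : Fin n → ℝ) (lam : Fin n → Fin n → ℝ) (θ : ℝ)
    (A : Finset (Fin n)) : Set (Fin n) :=
  {v | v ∈ A ∧
    (mu r lam (A.erase v)).rootMultiplicity θ = (mu r lam A).rootMultiplicity θ + 1}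

/-- The set `+_{θ,A}`: `m_θ(A∖v) = m_θ(A)` and `α_v(A)(θ) > 0`. -/
def plusSet {n : ℕ} (r : Fin n → ℝ) (lam : Fin n → Fin n → ℝ) (θ : ℝ)
    (A : Finset (Fin n)) : Set (Fin n) :=
  {v | v ∈ A ∧
    (mu r lam (A.erase v)).rootMultiplicity θ = (mu r lam A).rootMultiplicity θ ∧
    ∃ t : ℝ, valAt (alpha r lam v A) θ = some t ∧ 0 < t}

/-- The set `−_{θ,A}`: `m_θ(A∖v) = m_θ(A)` and `α_v(A)(θ) < 0`. -/
def minusSet {n : ℕ} (r : Fin n → ℝ) (lam : Fin n → Fin n → ℝ) (θ : ℝ)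
    (A : Finset (Fin n)) : Set (Fin n) :=
  {v | v ∈ A ∧
    (mu r lam (A.erase v)).rootMultiplicity θ = (mu r lam A).rootMultiplicity θ ∧
    ∃ t : ℝ, valAt (alpha r lam v A) θ = some t ∧ t < 0}

/-- The frontier `∂0_{θ,A}`: vertices not in `0_{θ,A}` with a neighbor in `0_{θ,A}`. -/
def frontierZero {n : ℕ} (r : Fin n → ℝ) (lam : Fin n → Fin n → ℝ) (θ : ℝ)
    (A : Finset (Fin n)) : Set (Fin n) :=
  {v | v ∈ A ∧ v ∉ zeroSet r lam θ A ∧ ∃ w ∈ zeroSet r lam θ A, lam v w ≠ 0}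

/-- The underlying simple graph: edges are the pairs with nonzero edge weight. -/
def wGraph {n : ℕ} (lam : Fin n → Fin n → ℝ) : SimpleGraph (Fin n) :=
  SimpleGraph.fromRel fun j k => lam j k ≠ 0

section basic
variable {n : ℕ} {r : Fin n → ℝ} {lam : Fin n → Fin n → ℝ}

lemma mem_mVerts {M : Finset (Fin n × Fin n)} {v : Fin n} :
    v ∈ mVerts M ↔ ∃ e ∈ M, v = e.1 ∨ v = e.2 := by
  simp only [mVerts, Finset.mem_union, Finset.mem_image]
  constructor
  · rintro (⟨e, he, rfl⟩ | ⟨e, he, rfl⟩) <;> exact ⟨e, he, by simp⟩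
  · rintro ⟨e, he, rfl | rfl⟩
    · exact Or.inl ⟨e, he, rfl⟩
    · exact Or.inr ⟨e, he, rfl⟩

lemma mem_matchings {A : Finset (Fin n)} {M : Finset (Fin n × Fin n)} :
    M ∈ matchings lam A ↔ IsMatching lam A M := by
  simp [matchings]

def pr (i k : Fin n) : Fin n × Fin n := if i < k then (i, k) else (k, i)

lemma pr_endpoints {i k : Fin n} : pr i k = (i, k) ∨ pr i k = (k, i) := by
  unfold pr; split <;> simp

lemma pr_lt {i k : Fin n} (h : i ≠ k) : (pr i k).1 < (pr i k).2 := by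
  unfold pr; split
  · assumption
  · exact lt_of_le_of_ne (not_lt.mp (by assumption)) (Ne.symm h)

lemma pr_lam (hsym : ∀ j k, lam j k = lam k j) {i k : Fin n} :
    lam (pr i k).1 (pr i k).2 = lam i k := by
  unfold pr; split
  · rfl
  · exact (hsym i k).symm

lemma erase_pr {A : Finset (Fin n)} {i k : Fin n} :
    (A.erase (pr i k).1).erase (pr i k).2 = (A.erase i).erase k := by
  rcases pr_endpoints (i := i) (k := k) with h | h <;> rw [h]
  exact Finset.erase_right_comm

lemma isMatching_erase_iff {A : Finset (Fin n)} {i : Fin n}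
    {M : Finset (Fin n × Fin n)} :
    IsMatching lam (A.erase i) M ↔ IsMatching lam A M ∧ i ∉ mVerts M := by
  constructor
  · rintro ⟨h1, h2⟩
    refine ⟨⟨fun e he => ?_, h2⟩, ?_⟩
    · obtain ⟨a, b, c, d⟩ := h1 e he
      exact ⟨a, b, Finset.mem_of_mem_erase c, Finset.mem_of_mem_erase d⟩
    · rw [mem_mVerts]
      rintro ⟨e, he, rfl | rfl⟩
      · exact Finset.notMem_erase _ _ (h1 e he).2.2.1
      · exact Finset.notMem_erase _ _ (h1 e he).2.2.2
  · rintro ⟨⟨h1, h2⟩, hi⟩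
    refine ⟨fun e he => ?_, h2⟩
    obtain ⟨a, b, c, d⟩ := h1 e he
    rw [mem_mVerts] at hi
    push_neg at hi
    exact ⟨a, b, Finset.mem_erase.mpr ⟨fun h => (hi e he).1 h.symm, c⟩,
      Finset.mem_erase.mpr ⟨fun h => (hi e he).2 h.symm, d⟩⟩

lemma matching_erase {A : Finset (Fin n)} {M : Finset (Fin n × Fin n)}
    (hM : IsMatching lam A M) {e : Fin n × Fin n} (he : e ∈ M) :
    IsMatching lam ((A.erase e.1).erase e.2) (M.erase e) := by
  obtain ⟨h1, h2⟩ := hM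
  constructor
  · intro f hf
    obtain ⟨hfe, hfM⟩ := Finset.mem_erase.mp hf
    obtain ⟨a, b, c, d⟩ := h1 f hfM
    have h4 := h2 f hfM e he hfe
    exact ⟨a, b,
      Finset.mem_erase.mpr ⟨h4.2.1, Finset.mem_erase.mpr ⟨h4.1, c⟩⟩,
      Finset.mem_erase.mpr ⟨h4.2.2.2, Finset.mem_erase.mpr ⟨h4.2.2.1, d⟩⟩⟩
  · intro f hf g hg
    exact h2 f (Finset.mem_of_mem_erase hf) g (Finset.mem_of_mem_erase hg)

lemma not_mem_of_matching_erased {A : Finset (Fin n)} {N : Finset (Fin n × Fin n)}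
    {e : Fin n × Fin n}
    (hN : IsMatching lam ((A.erase e.1).erase e.2) N) : e ∉ N := fun h =>
  (Finset.mem_erase.mp (Finset.mem_of_mem_erase (hN.1 e h).2.2.1)).1 rfl

lemma matching_insert {A : Finset (Fin n)} {e : Fin n × Fin n}
    (he1 : e.1 ∈ A) (he2 : e.2 ∈ A) (hlt : e.1 < e.2) (h0 : lam e.1 e.2 ≠ 0)
    {N : Finset (Fin n × Fin n)}
    (hN : IsMatching lam ((A.erase e.1).erase e.2) N) :
    IsMatching lam A (insert e N) := by
  obtain ⟨h1, h2⟩ := hN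
  constructor
  · intro f hf
    rcases Finset.mem_insert.mp hf with rfl | hfN
    · exact ⟨hlt, h0, he1, he2⟩
    · obtain ⟨a, b, c, d⟩ := h1 f hfN
      exact ⟨a, b, Finset.mem_of_mem_erase (Finset.mem_of_mem_erase c),
        Finset.mem_of_mem_erase (Finset.mem_of_mem_erase d)⟩
  · intro f hf g hg hfg
    have key : ∀ p ∈ N, p.1 ≠ e.1 ∧ p.1 ≠ e.2 ∧ p.2 ≠ e.1 ∧ p.2 ≠ e.2 := by
      intro p hp
      obtain ⟨-, -, c, d⟩ := h1 p hp
      exact ⟨(Finset.mem_erase.mp (Finset.mem_of_mem_erase c)).1,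
        (Finset.mem_erase.mp c).1,
        (Finset.mem_erase.mp (Finset.mem_of_mem_erase d)).1,
        (Finset.mem_erase.mp d).1⟩
    rcases Finset.mem_insert.mp hf with rfl | hfN <;>
      rcases Finset.mem_insert.mp hg with rfl | hgN
    · exact absurd rfl hfg
    · obtain ⟨a, b, c, d⟩ := key g hgN
      exact ⟨Ne.symm a, Ne.symm c, Ne.symm b, Ne.symm d⟩
    · exact key f hfN
    · exact h2 f hfN g hgN hfg

lemma sdiff_mVerts_erase {A : Finset (Fin n)} {M : Finset (Fin n × Fin n)}
    (hM : IsMatching lam A M) {e : Fin n × Fin n} (he : e ∈ M) :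
    A \ mVerts M = ((A.erase e.1).erase e.2) \ mVerts (M.erase e) := by
  ext v
  simp only [Finset.mem_sdiff, Finset.mem_erase, mem_mVerts]
  constructor
  · rintro ⟨hvA, hv⟩
    push_neg at hv
    refine ⟨⟨fun h => (hv e he).2 h, fun h => (hv e he).1 h, hvA⟩, ?_⟩
    rintro ⟨f, hf, hvf⟩
    have := hv f hf.2
    rcases hvf with h | h
    · exact this.1 h
    · exact this.2 h
  · rintro ⟨⟨hv2, hv1, hvA⟩, hv⟩
    refine ⟨hvA, ?_⟩
    rintro ⟨f, hf, hvf⟩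
    by_cases hfe : f = e
    · subst hfe
      rcases hvf with h | h
      · exact hv1 h
      · exact hv2 h
    · exact hv ⟨f, ⟨hfe, hf⟩, hvf⟩

lemma mu_recurrence (hsym : ∀ j k, lam j k = lam k j) {A : Finset (Fin n)} {i : Fin n}
    (hi : i ∈ A) :
    mu r lam A = (X - C (r i)) * mu r lam (A.erase i)
      + ∑ k ∈ A.erase i, C (lam i k) * mu r lam ((A.erase i).erase k) := by
  have key := Finset.sum_filter_add_sum_filter_not (matchings lam A)
    (fun M => i ∈ mVerts M)
    (fun M => (∏ v ∈ A \ mVerts M, (X - C (r v))) * C (∏ e ∈ M, lam e.1 e.2))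
  rw [mu, ← key, add_comm]
  congr 1
  -- part 1 : matchings avoiding i
  · rw [mu, Finset.mul_sum]
    apply Finset.sum_nbij' (fun M => M) (fun M => M)
    · intro M hM
      simp only [Finset.mem_filter, mem_matchings] at hM
      exact mem_matchings.mpr (isMatching_erase_iff.mpr ⟨hM.1, hM.2⟩)
    · intro M hM
      rw [mem_matchings, isMatching_erase_iff] at hM
      simp only [Finset.mem_filter, mem_matchings]
      exact ⟨hM.1, hM.2⟩
    · intros; rfl
    · intros; rfl
    · intro M hM
      simp only [Finset.mem_filter, mem_matchings] at hM
      have hiM : i ∈ A \ mVerts M := Finset.mem_sdiff.mpr ⟨hi, hM.2⟩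
      rw [← Finset.mul_prod_erase _ _ hiM, Finset.erase_sdiff_comm, mul_assoc]
  -- part 2 : matchings covering i
  · have cover : (matchings lam A).filter (fun M => i ∈ mVerts M)
        = (A.erase i).biUnion
            (fun k => (matchings lam A).filter (fun M => pr i k ∈ M)) := by
      ext M
      simp only [Finset.mem_filter, Finset.mem_biUnion]
      constructor
      · rintro ⟨hM, hiM⟩
        rw [mem_mVerts] at hiM
        obtain ⟨e, he, hie⟩ := hiM
        obtain ⟨hlt, hne0, h1A, h2A⟩ := (mem_matchings.mp hM).1 e he
        rcases hie with h1 | h2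
        · have hilt : i < e.2 := by rw [h1]; exact hlt
          refine ⟨e.2, Finset.mem_erase.mpr ⟨ne_of_gt hilt, h2A⟩, hM, ?_⟩
          have : pr i e.2 = e := by
            unfold pr; rw [if_pos hilt, h1]
          rw [this]; exact he
        · have hilt : e.1 < i := by rw [h2]; exact hlt
          refine ⟨e.1, Finset.mem_erase.mpr ⟨ne_of_lt hilt, h1A⟩, hM, ?_⟩
          have : pr i e.1 = e := by
            unfold pr; rw [if_neg (not_lt.mpr (le_of_lt hilt)), h2]
          rw [this]; exact he
      · rintro ⟨k, hk, hM, hpr⟩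
        refine ⟨hM, mem_mVerts.mpr ⟨pr i k, hpr, ?_⟩⟩
        rcases pr_endpoints (i := i) (k := k) with h | h <;> rw [h]
        · exact Or.inl rfl
        · exact Or.inr rfl
    have disj : (↑(A.erase i) : Set (Fin n)).PairwiseDisjoint
        (fun k => (matchings lam A).filter (fun M => pr i k ∈ M)) := by
      intro k hk k' hk' hkk'
      simp only [Finset.coe_erase, Set.mem_diff, Finset.mem_coe,
        Set.mem_singleton_iff] at hk hk'
      apply Finset.disjoint_left.mpr
      intro M hMk hMk'
      simp only [Finset.mem_filter, mem_matchings] at hMk hMk'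
      have hik : i ≠ k := fun h => hk.2 h.symm
      have hik' : i ≠ k' := fun h => hk'.2 h.symm
      have hne : pr i k ≠ pr i k' := by
        rcases pr_endpoints (i := i) (k := k) with h | h <;>
          rcases pr_endpoints (i := i) (k := k') with h' | h' <;>
          rw [h, h'] <;> simp only [ne_eq, Prod.mk.injEq, not_and] <;> tauto
      have h4 := hMk.1.2 _ hMk.2 _ hMk'.2 hne
      rcases pr_endpoints (i := i) (k := k) with h | h <;>
        rcases pr_endpoints (i := i) (k := k') with h' | h' <;>
        rw [h, h'] at h4
      · exact h4.1 rfl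
      · exact h4.2.1 rfl
      · exact h4.2.2.1 rfl
      · exact h4.2.2.2 rfl
    rw [cover, Finset.sum_biUnion disj]
    apply Finset.sum_congr rfl
    intro k hk
    have hik : i ≠ k := (Finset.mem_erase.mp hk).1.symm
    by_cases h0 : lam i k = 0
    · rw [h0, map_zero, zero_mul]
      apply Finset.sum_eq_zero
      intro M hM
      simp only [Finset.mem_filter, mem_matchings] at hM
      exact absurd ((hM.1.1 _ hM.2).2.1) (by rw [pr_lam hsym, h0]; simp)
    · rw [mu, Finset.mul_sum]
      apply Finset.sum_nbij' (fun M => M.erase (pr i k)) (fun N => insert (pr i k) N)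
      · intro M hM
        simp only [Finset.mem_filter, mem_matchings] at hM
        rw [mem_matchings, ← erase_pr (i := i) (k := k) (A := A)]
        exact matching_erase hM.1 hM.2
      · intro N hN
        rw [mem_matchings, ← erase_pr (i := i) (k := k) (A := A)] at hN
        simp only [Finset.mem_filter, mem_matchings]
        have hprN : pr i k ∉ N := not_mem_of_matching_erased hN
        have h1 : (pr i k).1 ∈ A := by
          rcases pr_endpoints (i := i) (k := k) with h | h <;> rw [h]
          · exact hi
          · exact Finset.mem_of_mem_erase hk
        have h2 : (pr i k).2 ∈ A := by
          rcases pr_endpoints (i := i) (k := k) with h | h <;> rw [h]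
          · exact Finset.mem_of_mem_erase hk
          · exact hi
        exact ⟨matching_insert h1 h2 (pr_lt hik) (by rw [pr_lam hsym]; exact h0) hN,
          Finset.mem_insert_self _ _⟩
      · intro M hM
        simp only [Finset.mem_filter] at hM
        exact Finset.insert_erase hM.2
      · intro N hN
        rw [mem_matchings, ← erase_pr (i := i) (k := k) (A := A)] at hN
        exact Finset.erase_insert (not_mem_of_matching_erased hN)
      · intro M hM
        simp only [Finset.mem_filter, mem_matchings] at hM
        obtain ⟨hMm, hpr⟩ := hM
        have hsets := sdiff_mVerts_erase hMm hpr
        rw [erase_pr] at hsets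
        have hprod : (∏ e ∈ M, lam e.1 e.2)
            = lam i k * ∏ e ∈ M.erase (pr i k), lam e.1 e.2 := by
          rw [← Finset.mul_prod_erase _ _ hpr, pr_lam hsym]
        rw [hsets, hprod, map_mul]
        ring
end basic

section more
variable {n : ℕ} {r : Fin n → ℝ} {lam : Fin n → Fin n → ℝ}

lemma matchings_empty' : matchings lam (∅ : Finset (Fin n)) = {∅} := by
  ext M
  simp only [mem_matchings, Finset.mem_singleton]
  constructor
  · rintro ⟨h1, -⟩
    ext e
    simp only [Finset.notMem_empty, iff_false]
    intro he
    exact absurd (h1 e he).2.2.1 (by simp)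
  · rintro rfl
    exact ⟨by simp, by simp⟩

lemma mu_empty : mu r lam (∅ : Finset (Fin n)) = 1 := by
  simp [mu, matchings_empty', mVerts]

lemma matchings_empty_mem {A : Finset (Fin n)} :
    (∅ : Finset (Fin n × Fin n)) ∈ matchings lam A := by
  rw [mem_matchings]; exact ⟨by simp, by simp⟩

lemma mu_coeff_card {A : Finset (Fin n)} : (mu r lam A).coeff A.card = 1 := by
  rw [mu, ← Finset.add_sum_erase _ _ (matchings_empty_mem (A := A) (lam := lam))]
  have h0 : mVerts (∅ : Finset (Fin n × Fin n)) = ∅ := by simp [mVerts]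
  rw [Polynomial.coeff_add]
  have hmon : (∏ v ∈ A, (X - C (r v))).Monic :=
    monic_prod_of_monic _ _ fun v _ => monic_X_sub_C (r v)
  have hdeg : (∏ v ∈ A, (X - C (r v))).natDegree = A.card := by
    rw [natDegree_prod _ _ fun v _ => X_sub_C_ne_zero (r v)]
    simp [natDegree_X_sub_C]
  have h1 : ((∏ v ∈ A \ mVerts (∅ : Finset (Fin n × Fin n)), (X - C (r v)))
      * C (∏ e ∈ (∅ : Finset (Fin n × Fin n)), lam e.1 e.2)).coeff A.card = 1 := by
    rw [h0, Finset.sdiff_empty, Finset.prod_empty, map_one, mul_one]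
    have := hmon.coeff_natDegree
    rwa [hdeg] at this
  rw [h1]
  have h2 : ∀ M ∈ (matchings lam A).erase ∅,
      ((∏ v ∈ A \ mVerts M, (X - C (r v))) * C (∏ e ∈ M, lam e.1 e.2)).coeff A.card
        = 0 := by
    intro M hM
    obtain ⟨hMne, hMm⟩ := Finset.mem_erase.mp hM
    have hsub : A \ mVerts M ⊂ A := by
      obtain ⟨e, he⟩ := Finset.nonempty_iff_ne_empty.mpr hMne
      rw [Finset.ssubset_iff_of_subset Finset.sdiff_subset]
      refine ⟨e.1, ((mem_matchings.mp hMm).1 e he).2.2.1, ?_⟩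
      simp only [Finset.mem_sdiff, not_and, not_not]
      intro
      exact mem_mVerts.mpr ⟨e, he, Or.inl rfl⟩
    apply coeff_eq_zero_of_natDegree_lt
    calc ((∏ v ∈ A \ mVerts M, (X - C (r v))) * C (∏ e ∈ M, lam e.1 e.2)).natDegree
        ≤ (∏ v ∈ A \ mVerts M, (X - C (r v))).natDegree
            + (C (∏ e ∈ M, lam e.1 e.2)).natDegree := natDegree_mul_le
      _ ≤ (A \ mVerts M).card := by
          rw [natDegree_C, add_zero,
            natDegree_prod _ _ fun v _ => X_sub_C_ne_zero (r v)]
          simp [natDegree_X_sub_C]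
      _ < A.card := Finset.card_lt_card hsub
  rw [finset_sum_coeff, Finset.sum_congr rfl h2, Finset.sum_const_zero, add_zero]

lemma mu_ne_zero {A : Finset (Fin n)} : mu r lam A ≠ 0 := fun h => by
  have := mu_coeff_card (r := r) (lam := lam) (A := A)
  rw [h, coeff_zero] at this
  norm_num at this

lemma mu_derivative (hsym : ∀ j k, lam j k = lam k j) (A : Finset (Fin n)) :
    derivative (mu r lam A) = ∑ j ∈ A, mu r lam (A.erase j) := by
  induction A using Finset.strongInduction with
  | _ A ih =>
    rcases Finset.eq_empty_or_nonempty A with rfl | ⟨i, hi⟩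
    · simp [mu_empty]
    · rw [mu_recurrence hsym hi, derivative_add, derivative_mul]
      have dX : derivative (X - C (r i)) = 1 := by
        rw [derivative_sub, derivative_X, derivative_C, sub_zero]
      rw [dX, one_mul, ih _ (Finset.erase_ssubset hi)]
      have hsum : derivative (∑ k ∈ A.erase i,
          C (lam i k) * mu r lam ((A.erase i).erase k))
          = ∑ k ∈ A.erase i, C (lam i k)
              * ∑ j ∈ (A.erase i).erase k, mu r lam (((A.erase i).erase k).erase j) := by
        rw [derivative_sum]
        refine Finset.sum_congr rfl fun k _ => ?_
        rw [derivative_mul, derivative_C, zero_mul, zero_add,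
          ih _ (lt_of_le_of_lt (Finset.erase_subset _ _) (Finset.erase_ssubset hi))]
      rw [hsum, ← Finset.add_sum_erase _ _ hi, add_assoc]
      congr 1
      have hB : ∀ j ∈ A.erase i, mu r lam (A.erase j)
          = (X - C (r i)) * mu r lam ((A.erase i).erase j)
            + ∑ k ∈ (A.erase i).erase j, C (lam i k)
                * mu r lam (((A.erase i).erase j).erase k) := by
        intro j hj
        have hij : i ≠ j := ((Finset.mem_erase.mp hj).1).symm
        have hji : i ∈ A.erase j := Finset.mem_erase.mpr ⟨hij, hi⟩
        rw [mu_recurrence hsym hji, Finset.erase_right_comm (s := A) (a := j) (b := i)]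
      rw [Finset.sum_congr rfl hB, Finset.sum_add_distrib, ← Finset.mul_sum]
      congr 1
      have swap : ∑ k ∈ A.erase i, ∑ j ∈ (A.erase i).erase k,
            C (lam i k) * mu r lam (((A.erase i).erase k).erase j)
          = ∑ j ∈ A.erase i, ∑ k ∈ (A.erase i).erase j,
            C (lam i k) * mu r lam (((A.erase i).erase k).erase j) := by
        apply Finset.sum_comm'
        intro k j
        simp only [Finset.mem_erase]
        constructor
        · rintro ⟨⟨hki, hkA⟩, hjk, hji, hjA⟩
          exact ⟨⟨Ne.symm hjk, hki, hkA⟩, hji, hjA⟩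
        · rintro ⟨⟨hkj, hki, hkA⟩, hji, hjA⟩
          exact ⟨⟨hki, hkA⟩, Ne.symm hkj, hji, hjA⟩
      calc ∑ k ∈ A.erase i, C (lam i k)
            * ∑ j ∈ (A.erase i).erase k, mu r lam (((A.erase i).erase k).erase j)
          = ∑ k ∈ A.erase i, ∑ j ∈ (A.erase i).erase k,
              C (lam i k) * mu r lam (((A.erase i).erase k).erase j) := by
            refine Finset.sum_congr rfl fun k _ => ?_
            rw [Finset.mul_sum]
        _ = ∑ j ∈ A.erase i, ∑ k ∈ (A.erase i).erase j,
              C (lam i k) * mu r lam (((A.erase i).erase k).erase j) := swap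
        _ = ∑ j ∈ A.erase i, ∑ k ∈ (A.erase i).erase j,
              C (lam i k) * mu r lam (((A.erase i).erase j).erase k) := by
            refine Finset.sum_congr rfl fun j _ => Finset.sum_congr rfl fun k _ => ?_
            rw [Finset.erase_right_comm]
end more

section paths
variable {n : ℕ} {r : Fin n → ℝ} {lam : Fin n → Fin n → ℝ}

lemma isPathIn_finite (lam : Fin n → Fin n → ℝ) (A : Finset (Fin n)) (i j : Fin n) :
    {l : List (Fin n) | IsPathIn lam A i j l}.Finite :=
  (List.finite_length_le (Fin n) n).subset fun l hl => by
    simpa using hl.2.1.length_le_card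

noncomputable def pathFinset (lam : Fin n → Fin n → ℝ) (A : Finset (Fin n))
    (i j : Fin n) : Finset (List (Fin n)) :=
  (isPathIn_finite lam A i j).toFinset

lemma mem_pathFinset {A : Finset (Fin n)} {i j : Fin n} {l : List (Fin n)} :
    l ∈ pathFinset lam A i j ↔ IsPathIn lam A i j l := by
  simp [pathFinset, Set.Finite.mem_toFinset]

lemma finsum_paths {M : Type*} [AddCommMonoid M] (A : Finset (Fin n)) (i j : Fin n)
    (F : List (Fin n) → M) :
    (∑ᶠ l ∈ {l : List (Fin n) | IsPathIn lam A i j l}, F l)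
      = ∑ l ∈ pathFinset lam A i j, F l := by
  rw [← finsum_mem_coe_finset]
  congr 1
  simp [pathFinset, Set.Finite.coe_toFinset]

lemma path_self {A : Finset (Fin n)} {j : Fin n} {l : List (Fin n)}
    (h : IsPathIn lam A j j l) : l = [j] := by
  obtain ⟨hne, hnd, -, hh, hl, -⟩ := h
  match l, hne with
  | a :: t, _ =>
    rw [List.head?_cons, Option.some_inj] at hh
    subst hh
    match t with
    | [] => rfl
    | b :: t' =>
      exfalso
      rw [List.getLast?_cons_cons] at hl
      obtain ⟨h1, h2⟩ := List.mem_getLast?_eq_getLast (Option.mem_def.mpr hl)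
      have : a ∈ b :: t' := h2 ▸ List.getLast_mem h1
      exact (List.nodup_cons.mp hnd).1 this

lemma pathFinset_self {A : Finset (Fin n)} {j : Fin n} (hj : j ∈ A) :
    pathFinset lam A j j = {[j]} := by
  ext l
  rw [mem_pathFinset, Finset.mem_singleton]
  constructor
  · exact path_self
  · rintro rfl
    exact ⟨by simp, by simp, by simpa using hj, rfl, rfl, List.isChain_singleton j⟩

lemma pathWeight_singleton (j : Fin n) : pathWeight lam [j] = 1 := by
  simp [pathWeight]

lemma pathWeight_cons {i k : Fin n} {t : List (Fin n)} (ht : t.head? = some k) :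
    pathWeight lam (i :: t) = -lam i k * pathWeight lam t := by
  match t, ht with
  | b :: t', hth =>
    rw [List.head?_cons, Option.some_inj] at hth
    subst hth
    simp [pathWeight]

lemma sdiff_toFinset_cons {A : Finset (Fin n)} {i : Fin n} {t : List (Fin n)} :
    A \ (i :: t).toFinset = (A.erase i) \ t.toFinset := by
  ext v
  simp only [Finset.mem_sdiff, List.toFinset_cons, Finset.mem_insert, Finset.mem_erase]
  tauto

lemma sum_paths_decomp {M : Type*} [AddCommMonoid M] {A : Finset (Fin n)} {i j : Fin n}
    (hiA : i ∈ A) (hij : i ≠ j) (F : List (Fin n) → M) :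
    ∑ l ∈ pathFinset lam A i j, F l
      = ∑ k ∈ (A.erase i).filter (fun k => lam i k ≠ 0),
          ∑ t ∈ pathFinset lam (A.erase i) k j, F (i :: t) := by
  rw [Finset.sum_sigma' ((A.erase i).filter (fun k => lam i k ≠ 0))
    (fun k => pathFinset lam (A.erase i) k j) (fun _ t => F (i :: t))]
  apply Finset.sum_nbij'
    (fun l => (⟨(l.tail.head?).getD i, l.tail⟩ : Σ _ : Fin n, List (Fin n)))
    (fun p => i :: p.2)
  · -- forward membership
    intro l hl
    obtain ⟨hne, hnd, hA, hh, hgl, hch⟩ := mem_pathFinset.mp hl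
    match l, hne with
    | a :: t, _ =>
      rw [List.head?_cons, Option.some_inj] at hh
      subst hh
      have htne : t ≠ [] := by
        rintro rfl
        simp only [List.getLast?_singleton, Option.some_inj] at hgl
        exact hij hgl
      match t, htne with
      | b :: t', _ =>
        simp only [List.tail_cons, List.head?_cons, Option.getD_some]
        rw [Finset.mem_sigma, Finset.mem_filter]
        have hbA : b ∈ A.erase a := by
          refine Finset.mem_erase.mpr ⟨?_, hA b (by simp)⟩
          intro hbi
          exact (List.nodup_cons.mp hnd).1 (hbi ▸ List.mem_cons_self (a := b) (l := t'))
        have hlam : lam a b ≠ 0 := (List.isChain_cons_cons.mp hch).1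
        refine ⟨⟨hbA, hlam⟩, mem_pathFinset.mpr ⟨by simp, (List.nodup_cons.mp hnd).2, ?_, rfl, ?_, (List.isChain_cons_cons.mp hch).2⟩⟩
        · intro v hv
          refine Finset.mem_erase.mpr ⟨?_, hA v (List.mem_cons_of_mem _ hv)⟩
          intro hvi
          exact (List.nodup_cons.mp hnd).1 (hvi ▸ hv)
        · rw [← hgl, List.getLast?_cons_cons]
  · -- backward membership
    rintro ⟨k, t⟩ hp
    rw [Finset.mem_sigma, Finset.mem_filter] at hp
    obtain ⟨⟨hk, hlam⟩, ht⟩ := hp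
    dsimp only at hk hlam ht ⊢
    obtain ⟨htne, htnd, htA, hth, htl, htch⟩ := mem_pathFinset.mp ht
    refine mem_pathFinset.mpr ⟨by simp, ?_, ?_, rfl, ?_, ?_⟩
    · refine List.nodup_cons.mpr ⟨?_, htnd⟩
      intro hit
      exact (Finset.mem_erase.mp (htA i hit)).1 rfl
    · intro v hv
      rcases List.mem_cons.mp hv with rfl | hvt
      · exact hiA
      · exact Finset.mem_of_mem_erase (htA v hvt)
    · match t, htne with
      | b :: t', _ => rw [List.getLast?_cons_cons]; exact htl
    · refine List.isChain_cons.mpr ?_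
      refine ⟨?_, htch⟩
      intro y hy
      rw [hth, Option.mem_def, Option.some_inj] at hy
      subst hy
      exact hlam
  · -- left inverse
    intro l hl
    obtain ⟨hne, -, -, hh, hgl, -⟩ := mem_pathFinset.mp hl
    match l, hne with
    | a :: t, _ =>
      rw [List.head?_cons, Option.some_inj] at hh
      subst hh
      rfl
  · -- right inverse
    rintro ⟨k, t⟩ hp
    rw [Finset.mem_sigma] at hp
    obtain ⟨-, ht⟩ := hp
    obtain ⟨htne, -, -, hth, -, -⟩ := mem_pathFinset.mp ht
    match t, htne with
    | b :: t', _ =>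
      rw [List.head?_cons, Option.some_inj] at hth
      subst hth
      rfl
  · -- summand
    intro l hl
    obtain ⟨hne, -, -, hh, -, -⟩ := mem_pathFinset.mp hl
    match l, hne with
    | a :: t, _ =>
      rw [List.head?_cons, Option.some_inj] at hh
      subst hh
      rfl

lemma head_of_mem_pathFinset {A : Finset (Fin n)} {k j : Fin n} {t : List (Fin n)}
    (ht : t ∈ pathFinset lam A k j) : t.head? = some k :=
  (mem_pathFinset.mp ht).2.2.2.1

end paths

section godsil
variable {n : ℕ} {r : Fin n → ℝ} {lam : Fin n → Fin n → ℝ}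

lemma godsil (hsym : ∀ j k, lam j k = lam k j) (A : Finset (Fin n)) :
    ∀ i ∈ A, ∀ j ∈ A, i ≠ j →
    mu r lam (A.erase i) * mu r lam (A.erase j)
      - mu r lam A * mu r lam ((A.erase i).erase j)
    = ∑ l ∈ pathFinset lam A i j,
        C (pathWeight lam l) * mu r lam (A \ l.toFinset) ^ 2 := by
  induction A using Finset.strongInduction with
  | _ A ih =>
    intro i hi j hj hij
    set B := A.erase i with hB
    have hjB : j ∈ B := Finset.mem_erase.mpr ⟨hij.symm, hj⟩
    have e1 : mu r lam A = (X - C (r i)) * mu r lam B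
        + ∑ k ∈ B, C (lam i k) * mu r lam (B.erase k) := mu_recurrence hsym hi
    have hiAj : i ∈ A.erase j := Finset.mem_erase.mpr ⟨hij, hi⟩
    have e2 : mu r lam (A.erase j) = (X - C (r i)) * mu r lam (B.erase j)
        + ∑ k ∈ B.erase j, C (lam i k) * mu r lam ((B.erase j).erase k) := by
      have h := mu_recurrence (r := r) hsym hiAj
      rwa [Finset.erase_right_comm (s := A) (a := j) (b := i), ← hB] at h
    -- the common expression
    have expand : mu r lam B * mu r lam (A.erase j) - mu r lam A * mu r lam (B.erase j)
        = -(C (lam i j) * mu r lam (B.erase j) ^ 2)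
          + (mu r lam B * ∑ k ∈ B.erase j, C (lam i k) * mu r lam ((B.erase j).erase k)
             - (∑ k ∈ B.erase j, C (lam i k) * mu r lam (B.erase k)) * mu r lam (B.erase j)) := by
      rw [e1, e2, ← Finset.add_sum_erase _ (fun k => C (lam i k) * mu r lam (B.erase k)) hjB]
      ring
    have hL : mu r lam B * mu r lam (A.erase j) - mu r lam A * mu r lam (B.erase j)
        = -(C (lam i j) * mu r lam (B.erase j) ^ 2)
          + ∑ k ∈ B.erase j, C (-lam i k) *
              ∑ t ∈ pathFinset lam B k j,
                C (pathWeight lam t) * mu r lam (B \ t.toFinset) ^ 2 := by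
      rw [expand]
      rw [add_right_inj]
      rw [Finset.mul_sum, Finset.sum_mul, ← Finset.sum_sub_distrib]
      refine Finset.sum_congr rfl fun k hk => ?_
      have hkB : k ∈ B := Finset.mem_of_mem_erase hk
      have hkj : k ≠ j := (Finset.mem_erase.mp hk).1
      have ihk := ih B (Finset.erase_ssubset hi) k hkB j hjB hkj
      have key : mu r lam B * (C (lam i k) * mu r lam ((B.erase j).erase k))
          - C (lam i k) * mu r lam (B.erase k) * mu r lam (B.erase j)
          = C (lam i k) * -(mu r lam (B.erase k) * mu r lam (B.erase j)
              - mu r lam B * mu r lam ((B.erase k).erase j)) := by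
        rw [Finset.erase_right_comm (s := B) (a := j) (b := k)]
        ring
      rw [key, ihk, map_neg]
      ring
    have hR : (∑ l ∈ pathFinset lam A i j,
          C (pathWeight lam l) * mu r lam (A \ l.toFinset) ^ 2)
        = -(C (lam i j) * mu r lam (B.erase j) ^ 2)
          + ∑ k ∈ B.erase j, C (-lam i k) *
              ∑ t ∈ pathFinset lam B k j,
                C (pathWeight lam t) * mu r lam (B \ t.toFinset) ^ 2 := by
      rw [sum_paths_decomp hi hij]
      have hstep : ∀ k ∈ B, (∑ t ∈ pathFinset lam B k j,
            C (pathWeight lam (i :: t)) * mu r lam (A \ (i :: t).toFinset) ^ 2)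
          = C (-lam i k) * ∑ t ∈ pathFinset lam B k j,
              C (pathWeight lam t) * mu r lam (B \ t.toFinset) ^ 2 := by
        intro k hk
        rw [Finset.mul_sum]
        refine Finset.sum_congr rfl fun t ht => ?_
        rw [pathWeight_cons (head_of_mem_pathFinset ht), sdiff_toFinset_cons, map_mul, ← hB]
        ring
      calc ∑ k ∈ B.filter (fun k => lam i k ≠ 0), ∑ t ∈ pathFinset lam B k j,
            C (pathWeight lam (i :: t)) * mu r lam (A \ (i :: t).toFinset) ^ 2
          = ∑ k ∈ B.filter (fun k => lam i k ≠ 0), C (-lam i k) *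
              ∑ t ∈ pathFinset lam B k j,
                C (pathWeight lam t) * mu r lam (B \ t.toFinset) ^ 2 :=
            Finset.sum_congr rfl fun k hk => hstep k (Finset.mem_of_mem_filter _ hk)
        _ = ∑ k ∈ B, C (-lam i k) *
              ∑ t ∈ pathFinset lam B k j,
                C (pathWeight lam t) * mu r lam (B \ t.toFinset) ^ 2 := by
            apply Finset.sum_filter_of_ne
            intro k hk hne h0
            apply hne
            rw [h0, neg_zero, map_zero, zero_mul]
        _ = C (-lam i j) * (∑ t ∈ pathFinset lam B j j,
                C (pathWeight lam t) * mu r lam (B \ t.toFinset) ^ 2)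
            + ∑ k ∈ B.erase j, C (-lam i k) *
              ∑ t ∈ pathFinset lam B k j,
                C (pathWeight lam t) * mu r lam (B \ t.toFinset) ^ 2 :=
            (Finset.add_sum_erase _ _ hjB).symm
        _ = -(C (lam i j) * mu r lam (B.erase j) ^ 2)
            + ∑ k ∈ B.erase j, C (-lam i k) *
              ∑ t ∈ pathFinset lam B k j,
                C (pathWeight lam t) * mu r lam (B \ t.toFinset) ^ 2 := by
            congr 1
            rw [pathFinset_self hjB, Finset.sum_singleton, pathWeight_singleton, map_one,
              one_mul]
            have hBj : B \ [j].toFinset = B.erase j := by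
              simp [Finset.sdiff_singleton_eq_erase]
            rw [hBj, map_neg]
            ring
    exact hL.trans hR.symm
end godsil


/-- (i) `μ(G)' = ∑_j μ(G∖j)`; (ii) the derivative of the rational function
`α_i(G) = μ(G)/μ(G∖i)` (written via the quotient rule) equals
`1 + ∑_{j ≠ i} ∑_{c ∈ [i→j]} λ_c · (μ(G∖c)/μ(G∖i))²` as an identity of rational
functions. -/
theorem stmt_4 (n : ℕ) (hn : 0 < n) (r : Fin n → ℝ) (lam : Fin n → Fin n → ℝ)
    (hsym : ∀ j k, lam j k = lam k j) (hnonpos : ∀ j k, lam j k ≤ 0)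
    (hdiag : ∀ i, lam i i = 0) (i : Fin n) :
    (Polynomial.derivative (mu r lam (Finset.univ : Finset (Fin n))) =
        ∑ j : Fin n, mu r lam (Finset.univ.erase j)) ∧
    ((toRF (Polynomial.derivative (mu r lam Finset.univ)) *
          toRF (mu r lam (Finset.univ.erase i)) -
        toRF (mu r lam Finset.univ) *
          toRF (Polynomial.derivative (mu r lam (Finset.univ.erase i)))) /
        toRF (mu r lam (Finset.univ.erase i)) ^ 2 =
      1 + ∑ j ∈ Finset.univ.erase i,
        ∑ᶠ l ∈ {l : List (Fin n) | IsPathIn lam Finset.univ i j l},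
          algebraMap ℝ (RatFunc ℝ) (pathWeight lam l) *
            (toRF (mu r lam (Finset.univ \ l.toFinset)) /
              toRF (mu r lam (Finset.univ.erase i))) ^ 2) := by
  constructor
  · exact mu_derivative hsym Finset.univ
  · -- polynomial identity
    have poly : derivative (mu r lam Finset.univ) * mu r lam (Finset.univ.erase i)
          - mu r lam Finset.univ * derivative (mu r lam (Finset.univ.erase i))
        = mu r lam (Finset.univ.erase i) ^ 2
          + ∑ j ∈ Finset.univ.erase i, ∑ l ∈ pathFinset lam Finset.univ i j,
              C (pathWeight lam l) * mu r lam (Finset.univ \ l.toFinset) ^ 2 := by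
      rw [mu_derivative hsym Finset.univ, mu_derivative hsym (Finset.univ.erase i),
        Finset.sum_mul,
        ← Finset.add_sum_erase _ (fun j => mu r lam (Finset.univ.erase j)
            * mu r lam (Finset.univ.erase i)) (Finset.mem_univ i),
        Finset.mul_sum, add_sub_assoc, ← Finset.sum_sub_distrib]
      congr 1
      · ring
      · refine Finset.sum_congr rfl fun j hj => ?_
        rw [mul_comm]
        exact godsil hsym Finset.univ i (Finset.mem_univ i) j (Finset.mem_univ j)
          ((Finset.mem_erase.mp hj).1.symm)
    -- pass to rational functions
    have hq : toRF (mu r lam (Finset.univ.erase i)) ≠ 0 :=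
      RatFunc.algebraMap_ne_zero mu_ne_zero
    set q := toRF (mu r lam (Finset.univ.erase i)) with hqdef
    have key : toRF (derivative (mu r lam Finset.univ)) * q
          - toRF (mu r lam Finset.univ) * toRF (derivative (mu r lam (Finset.univ.erase i)))
        = q ^ 2 + ∑ j ∈ Finset.univ.erase i, ∑ l ∈ pathFinset lam Finset.univ i j,
            algebraMap ℝ (RatFunc ℝ) (pathWeight lam l)
              * toRF (mu r lam (Finset.univ \ l.toFinset)) ^ 2 := by
      rw [hqdef]
      simp only [toRF, ← map_mul, ← map_sub, ← map_pow]
      rw [poly, map_add, map_sum]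
      congr 1
      refine Finset.sum_congr rfl fun j _ => ?_
      rw [map_sum]
      refine Finset.sum_congr rfl fun l _ => ?_
      rw [map_mul, map_pow, IsScalarTower.algebraMap_apply ℝ ℝ[X] (RatFunc ℝ),
        Polynomial.algebraMap_eq]
    rw [key]
    have hfin : ∀ j : Fin n,
        (∑ᶠ l ∈ {l : List (Fin n) | IsPathIn lam Finset.univ i j l},
          algebraMap ℝ (RatFunc ℝ) (pathWeight lam l) *
            (toRF (mu r lam (Finset.univ \ l.toFinset)) / q) ^ 2)
        = ∑ l ∈ pathFinset lam Finset.univ i j,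
            algebraMap ℝ (RatFunc ℝ) (pathWeight lam l) *
              (toRF (mu r lam (Finset.univ \ l.toFinset)) / q) ^ 2 := fun j =>
      finsum_paths Finset.univ i j _
    rw [Finset.sum_congr rfl fun j _ => hfin j]
    rw [add_div, div_self (pow_ne_zero 2 hq)]
    congr 1
    rw [Finset.sum_div]
    refine Finset.sum_congr rfl fun j _ => ?_
    rw [Finset.sum_div]
    refine Finset.sum_congr rfl fun l _ => ?_
    rw [div_pow, mul_div_assoc]
end

section
/- (Interlacing) For any weighted graph G and vertex i, the roots of μ(G) and μ(G∖i) interlace: between any two roots of μ(G) there is a root of μ(G∖i) and between any two roots of μ(G∖i) there is a root of μ(G); moreover, for every real number θ, m_θ(G∖i) ∈ {m_θ(G) − 1, m_θ(G), m_θ(G) + 1}. -/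
open Polynomial
open scoped Classical

namespace Stmt6

open Finset

variable {n : ℕ}

lemma mem_matchings {lam : Fin n → Fin n → ℝ} {A : Finset (Fin n)}
    {M : Finset (Fin n × Fin n)} : M ∈ matchings lam A ↔ IsMatching lam A M := by
  simp [matchings]

lemma mem_mVerts {M : Finset (Fin n × Fin n)} {v : Fin n} :
    v ∈ mVerts M ↔ ∃ e ∈ M, v = e.1 ∨ v = e.2 := by
  simp only [mVerts, Finset.mem_union, Finset.mem_image]
  constructor
  · rintro (⟨e, he, rfl⟩ | ⟨e, he, rfl⟩)
    · exact ⟨e, he, Or.inl rfl⟩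
    · exact ⟨e, he, Or.inr rfl⟩
  · rintro ⟨e, he, (rfl | rfl)⟩
    · exact Or.inl ⟨e, he, rfl⟩
    · exact Or.inr ⟨e, he, rfl⟩

lemma mVerts_subset {lam : Fin n → Fin n → ℝ} {A : Finset (Fin n)}
    {M : Finset (Fin n × Fin n)} (h : IsMatching lam A M) : mVerts M ⊆ A := by
  intro v hv
  rw [mem_mVerts] at hv
  obtain ⟨e, he, (rfl | rfl)⟩ := hv
  · exact (h.1 e he).2.2.1
  · exact (h.1 e he).2.2.2

lemma card_mVerts {lam : Fin n → Fin n → ℝ} {A : Finset (Fin n)}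
    {M : Finset (Fin n × Fin n)} (h : IsMatching lam A M) :
    (mVerts M).card = 2 * M.card := by
  have hdisj : Disjoint (M.image Prod.fst) (M.image Prod.snd) := by
    rw [Finset.disjoint_left]
    rintro v hv hv'
    simp only [Finset.mem_image] at hv hv'
    obtain ⟨e, he, rfl⟩ := hv
    obtain ⟨f, hf, hef⟩ := hv'
    by_cases hef' : e = f
    · subst hef'
      exact absurd hef.symm (ne_of_lt (h.1 e he).1)
    · exact (h.2 e he f hf hef').2.1 hef.symm
  have h1 : (M.image Prod.fst).card = M.card :=
    Finset.card_image_of_injOn (fun e he f hf hef => by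
      by_contra hne; exact (h.2 e he f hf hne).1 hef)
  have h2 : (M.image Prod.snd).card = M.card :=
    Finset.card_image_of_injOn (fun e he f hf hef => by
      by_contra hne; exact (h.2 e he f hf hne).2.2.2 hef)
  rw [mVerts, Finset.card_union_of_disjoint hdisj, h1, h2]
  omega

lemma empty_isMatching (lam : Fin n → Fin n → ℝ) (A : Finset (Fin n)) :
    IsMatching lam A (∅ : Finset (Fin n × Fin n)) := by
  constructor <;> intro e he <;> simp at he

lemma mu_coeff_card (r : Fin n → ℝ) (lam : Fin n → Fin n → ℝ) (A : Finset (Fin n)) :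
    (mu r lam A).coeff A.card = 1 := by
  rw [mu, Polynomial.finset_sum_coeff]
  rw [Finset.sum_eq_single_of_mem (∅ : Finset (Fin n × Fin n))
      (mem_matchings.2 (empty_isMatching lam A))]
  · have : mVerts (∅ : Finset (Fin n × Fin n)) = ∅ := by simp [mVerts]
    rw [this]
    simp only [Finset.sdiff_empty, Finset.prod_empty, map_one, mul_one]
    have hm : (∏ i ∈ A, (X - C (r i))).Monic :=
      Polynomial.monic_prod_of_monic _ _ (fun i _ => Polynomial.monic_X_sub_C (r i))
    have hd : (∏ i ∈ A, (X - C (r i))).natDegree = A.card := by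
      rw [Polynomial.natDegree_prod_of_monic _ _ (fun i _ => Polynomial.monic_X_sub_C (r i))]
      simp [Polynomial.natDegree_X_sub_C]
    rw [← hd]
    exact hm.coeff_natDegree
  · intro M hM hMne
    apply Polynomial.coeff_eq_zero_of_natDegree_lt
    have hmatch := mem_matchings.1 hM
    have hsub := mVerts_subset hmatch
    have hcards : (A \ mVerts M).card = A.card - 2 * M.card := by
      rw [Finset.card_sdiff_of_subset hsub, card_mVerts hmatch]
    have hMpos : 0 < M.card := Finset.card_pos.2 (Finset.nonempty_iff_ne_empty.2 hMne)
    have hle : 2 * M.card ≤ A.card := by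
      rw [← card_mVerts hmatch]; exact Finset.card_le_card hsub
    calc ((∏ i ∈ A \ mVerts M, (X - C (r i))) * C (∏ e ∈ M, lam e.1 e.2)).natDegree
        ≤ (∏ i ∈ A \ mVerts M, (X - C (r i))).natDegree + (C (∏ e ∈ M, lam e.1 e.2)).natDegree :=
          Polynomial.natDegree_mul_le
      _ ≤ (A \ mVerts M).card + 0 := by
          rw [Polynomial.natDegree_C]
          have := Polynomial.natDegree_prod_of_monic (A \ mVerts M) (fun i => X - C (r i))
            (fun i _ => Polynomial.monic_X_sub_C (r i))
          simp [this, Polynomial.natDegree_X_sub_C]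
      _ < A.card := by rw [hcards]; omega

lemma mu_ne_zero (r : Fin n → ℝ) (lam : Fin n → Fin n → ℝ) (A : Finset (Fin n)) :
    mu r lam A ≠ 0 := by
  intro h
  have := mu_coeff_card r lam A
  rw [h] at this
  simp at this



/-- The ordered pair representing the edge `{i,k}`. -/
def pr {n : ℕ} (i k : Fin n) : Fin n × Fin n := if i < k then (i, k) else (k, i)

variable {n : ℕ}

lemma pr_fst_or (i k : Fin n) : (pr i k) = (i, k) ∨ (pr i k) = (k, i) := by
  unfold pr; split <;> simp

lemma pr_inj {i k k' : Fin n} (hk : k ≠ i) (hk' : k' ≠ i) (h : pr i k = pr i k') :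
    k = k' := by
  rcases pr_fst_or i k with ha | ha <;> rcases pr_fst_or i k' with hb | hb <;>
      rw [ha, hb, Prod.ext_iff] at h
  · exact h.2
  · exact absurd h.1.symm hk'
  · exact absurd h.1 hk
  · exact h.1

lemma mVerts_insert (e : Fin n × Fin n) (M : Finset (Fin n × Fin n)) :
    mVerts (insert e M) = insert e.1 (insert e.2 (mVerts M)) := by
  ext v
  simp only [mVerts, Finset.mem_union, Finset.mem_image, Finset.mem_insert]
  aesop

lemma mVerts_insert_pr {i k : Fin n} (M : Finset (Fin n × Fin n)) :
    mVerts (insert (pr i k) M) = insert i (insert k (mVerts M)) := by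
  rcases pr_fst_or i k with h | h <;> rw [mVerts_insert, h]
  exact Finset.insert_comm k i (mVerts M)

lemma mu_rec (r : Fin n → ℝ) (lam : Fin n → Fin n → ℝ)
    (hsym : ∀ j k, lam j k = lam k j) {A : Finset (Fin n)} {i : Fin n} (hi : i ∈ A) :
    mu r lam A = (X - C (r i)) * mu r lam (A.erase i)
      + ∑ k ∈ A.erase i, C (lam i k) * mu r lam ((A.erase i).erase k) := by
  classical
  have hsplit := Finset.sum_filter_add_sum_filter_not (matchings lam A)
    (fun M => i ∈ mVerts M)
    (fun M => (∏ j ∈ A \ mVerts M, (X - C (r j))) * C (∏ e ∈ M, lam e.1 e.2))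
  rw [mu, ← hsplit, add_comm]
  congr 1
  · -- Part I : matchings avoiding i
    have hset : (matchings lam A).filter (fun M => ¬ i ∈ mVerts M)
        = matchings lam (A.erase i) := by
      ext M
      simp only [Finset.mem_filter, mem_matchings]
      constructor
      · rintro ⟨hM, hiM⟩
        refine ⟨fun e he => ?_, hM.2⟩
        obtain ⟨h1, h2, h3, h4⟩ := hM.1 e he
        refine ⟨h1, h2, Finset.mem_erase.2 ⟨?_, h3⟩, Finset.mem_erase.2 ⟨?_, h4⟩⟩
        · rintro rfl; exact hiM (mem_mVerts.2 ⟨e, he, Or.inl rfl⟩)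
        · rintro rfl; exact hiM (mem_mVerts.2 ⟨e, he, Or.inr rfl⟩)
      · intro hM
        refine ⟨⟨fun e he => ?_, hM.2⟩, fun hmem => ?_⟩
        · obtain ⟨h1, h2, h3, h4⟩ := hM.1 e he
          exact ⟨h1, h2, Finset.mem_of_mem_erase h3, Finset.mem_of_mem_erase h4⟩
        · obtain ⟨e, he, h⟩ := mem_mVerts.1 hmem
          obtain ⟨_, _, h3, h4⟩ := hM.1 e he
          rcases h with rfl | rfl
          · exact (Finset.mem_erase.1 h3).1 rfl
          · exact (Finset.mem_erase.1 h4).1 rfl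
    rw [hset, mu, Finset.mul_sum]
    apply Finset.sum_congr rfl
    intro M hM
    have hM' := mem_matchings.1 hM
    have hiM : i ∉ mVerts M := by
      intro hmem
      obtain ⟨e, he, h⟩ := mem_mVerts.1 hmem
      obtain ⟨_, _, h3, h4⟩ := hM'.1 e he
      rcases h with rfl | rfl
      · exact (Finset.mem_erase.1 h3).1 rfl
      · exact (Finset.mem_erase.1 h4).1 rfl
    have hAeq : A \ mVerts M = insert i ((A.erase i) \ mVerts M) := by
      ext v
      simp only [Finset.mem_sdiff, Finset.mem_insert, Finset.mem_erase]
      constructor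
      · rintro ⟨hvA, hvM⟩
        by_cases hvi : v = i
        · exact Or.inl hvi
        · exact Or.inr ⟨⟨hvi, hvA⟩, hvM⟩
      · rintro (rfl | ⟨⟨_, hvA⟩, hvM⟩)
        · exact ⟨hi, hiM⟩
        · exact ⟨hvA, hvM⟩
    have hinot : i ∉ (A.erase i) \ mVerts M := by
      simp [Finset.mem_sdiff]
    rw [hAeq, Finset.prod_insert hinot]
    ring
  · -- Part II : matchings covering i
    have step1 : ∑ k ∈ A.erase i, C (lam i k) * mu r lam ((A.erase i).erase k)
        = ∑ k ∈ (A.erase i).filter (fun k => lam i k ≠ 0),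
            C (lam i k) * mu r lam ((A.erase i).erase k) := by
      refine (Finset.sum_filter_of_ne ?_).symm
      intro k _ hk h0
      apply hk; rw [h0]; simp
    rw [step1]
    have step2 : ∀ k ∈ (A.erase i).filter (fun k => lam i k ≠ 0),
        C (lam i k) * mu r lam ((A.erase i).erase k)
          = ∑ M' ∈ matchings lam ((A.erase i).erase k),
              C (lam i k) * ((∏ j ∈ ((A.erase i).erase k) \ mVerts M', (X - C (r j)))
                * C (∏ e ∈ M', lam e.1 e.2)) := by
      intro k _
      rw [mu, Finset.mul_sum]
    rw [Finset.sum_congr rfl step2, Finset.sum_sigma']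
    refine (Finset.sum_bij (fun p _ => insert (pr i p.1) p.2) ?_ ?_ ?_ ?_).symm
    · -- maps to
      rintro ⟨k, M⟩ hp
      simp only [Finset.mem_sigma, Finset.mem_filter, Finset.mem_erase, mem_matchings] at hp
      obtain ⟨⟨⟨hki, hkA⟩, hlik⟩, hM⟩ := hp
      have hMsub : ∀ e ∈ M, e.1 ≠ i ∧ e.1 ≠ k ∧ e.2 ≠ i ∧ e.2 ≠ k := by
        intro e he
        obtain ⟨_, _, h3, h4⟩ := hM.1 e he
        obtain ⟨h3k, h3'⟩ := Finset.mem_erase.1 h3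
        obtain ⟨h4k, h4'⟩ := Finset.mem_erase.1 h4
        exact ⟨(Finset.mem_erase.1 h3').1, h3k, (Finset.mem_erase.1 h4').1, h4k⟩
      have hpr1 : (pr i k).1 < (pr i k).2 := by
        unfold pr
        rcases lt_or_gt_of_ne (Ne.symm hki : i ≠ k) with h | h
        · rw [if_pos h]; exact h
        · rw [if_neg (not_lt_of_gt h)]; exact h
      have hpr2 : lam (pr i k).1 (pr i k).2 ≠ 0 := by
        rcases pr_fst_or i k with h | h <;> rw [h]
        · exact hlik
        · rw [← hsym]; exact hlik
      simp only [Finset.mem_filter, mem_matchings]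
      refine ⟨⟨?_, ?_⟩, ?_⟩
      · intro e he
        rcases Finset.mem_insert.1 he with rfl | he'
        · refine ⟨hpr1, hpr2, ?_, ?_⟩ <;> rcases pr_fst_or i k with h | h <;> rw [h]
          · exact hi
          · exact hkA
          · exact hkA
          · exact hi
        · obtain ⟨h1, h2, h3, h4⟩ := hM.1 e he'
          exact ⟨h1, h2, Finset.mem_of_mem_erase (Finset.mem_of_mem_erase h3),
            Finset.mem_of_mem_erase (Finset.mem_of_mem_erase h4)⟩
      · intro e he f hf hef
        have key : ∀ g ∈ M, (pr i k).1 ≠ g.1 ∧ (pr i k).1 ≠ g.2 ∧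
            (pr i k).2 ≠ g.1 ∧ (pr i k).2 ≠ g.2 := by
          intro g hg
          obtain ⟨hg1, hg2, hg3, hg4⟩ := hMsub g hg
          rcases pr_fst_or i k with h | h <;> rw [h]
          · exact ⟨Ne.symm hg1, Ne.symm hg3, Ne.symm hg2, Ne.symm hg4⟩
          · exact ⟨Ne.symm hg2, Ne.symm hg4, Ne.symm hg1, Ne.symm hg3⟩
        rcases Finset.mem_insert.1 he with rfl | he' <;>
          rcases Finset.mem_insert.1 hf with rfl | hf'
        · exact absurd rfl hef
        · exact key f hf'
        · have := key e he'
          exact ⟨Ne.symm this.1, Ne.symm this.2.2.1, Ne.symm this.2.1, Ne.symm this.2.2.2⟩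
        · exact hM.2 e he' f hf' hef
      · rw [mVerts_insert_pr]
        simp
    · -- injectivity
      rintro ⟨k₁, M₁⟩ hp₁ ⟨k₂, M₂⟩ hp₂ heq
      simp only [Finset.mem_sigma, Finset.mem_filter, Finset.mem_erase, mem_matchings]
        at hp₁ hp₂
      obtain ⟨⟨⟨hk₁i, _⟩, _⟩, hM₁⟩ := hp₁
      obtain ⟨⟨⟨hk₂i, _⟩, _⟩, hM₂⟩ := hp₂
      have heq' : insert (pr i k₁) M₁ = insert (pr i k₂) M₂ := heq
      have hMsub : ∀ (k : Fin n) (M : Finset (Fin n × Fin n)),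
          IsMatching lam ((A.erase i).erase k) M → ∀ e ∈ M, e.1 ≠ i ∧ e.2 ≠ i := by
        intro k M hM e he
        obtain ⟨_, _, h3, h4⟩ := hM.1 e he
        exact ⟨(Finset.mem_erase.1 (Finset.mem_of_mem_erase h3)).1,
          (Finset.mem_erase.1 (Finset.mem_of_mem_erase h4)).1⟩
      have hpr_iM : ∀ (k : Fin n) (M : Finset (Fin n × Fin n)),
          IsMatching lam ((A.erase i).erase k) M → ∀ (k' : Fin n), pr i k' ∉ M := by
        intro k M hM k' hmem
        rcases pr_fst_or i k' with h | h
        · exact (hMsub k M hM _ hmem).1 (by rw [h])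
        · exact (hMsub k M hM _ hmem).2 (by rw [h])
      have h1 : pr i k₁ ∈ insert (pr i k₂) M₂ := by
        rw [← heq']; exact Finset.mem_insert_self _ _
      have h2 : pr i k₁ = pr i k₂ := by
        rcases Finset.mem_insert.1 h1 with h | h
        · exact h
        · exact absurd h (hpr_iM k₂ M₂ hM₂ k₁)
      have hk : k₁ = k₂ := pr_inj hk₁i hk₂i h2
      subst hk
      have hM : M₁ = M₂ := by
        have e1 : (insert (pr i k₁) M₁).erase (pr i k₁) = M₁ :=
          Finset.erase_insert (hpr_iM k₁ M₁ hM₁ k₁)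
        have e2 : (insert (pr i k₁) M₂).erase (pr i k₁) = M₂ :=
          Finset.erase_insert (hpr_iM k₁ M₂ hM₂ k₁)
        rw [← e1, ← e2, heq']
      subst hM
      rfl
    · -- surjectivity
      intro M hM
      simp only [Finset.mem_filter, mem_matchings] at hM
      obtain ⟨hM, hiM⟩ := hM
      obtain ⟨e, he, hie⟩ := mem_mVerts.1 hiM
      obtain ⟨helt, hlame, heA1, heA2⟩ := hM.1 e he
      set k : Fin n := if e.1 = i then e.2 else e.1 with hk
      have hki : k ≠ i := by
        rw [hk]
        split
        · next h => rintro rfl; rw [h] at helt; exact lt_irrefl _ helt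
        · next h => exact h
      have hkcase : (e.1 = i ∧ k = e.2) ∨ (e.2 = i ∧ k = e.1) := by
        rcases hie with h | h
        · left; exact ⟨h.symm, by rw [hk, if_pos h.symm]⟩
        · right
          refine ⟨h.symm, ?_⟩
          rw [hk, if_neg]
          rintro rfl
          rw [← h] at helt; exact lt_irrefl _ helt
      have hpre : pr i k = e := by
        rcases hkcase with ⟨h1, h2⟩ | ⟨h1, h2⟩
        · have : i < k := by rw [← h1, h2]; exact helt
          rw [pr, if_pos this, ← h1, h2]
        · have : k < i := by rw [← h1, h2]; exact helt
          rw [pr, if_neg (not_lt_of_gt this), ← h1, h2]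
      have hkA : k ∈ A := by
        rcases hkcase with ⟨_, h2⟩ | ⟨_, h2⟩ <;> rw [h2]
        · exact heA2
        · exact heA1
      have hlamik : lam i k ≠ 0 := by
        rcases hkcase with ⟨h1, h2⟩ | ⟨h1, h2⟩
        · rw [← h1, h2]; exact hlame
        · rw [← h1, h2, ← hsym]; exact hlame
      refine ⟨⟨k, M.erase e⟩, ?_, ?_⟩
      · simp only [Finset.mem_sigma, Finset.mem_filter, Finset.mem_erase, mem_matchings]
        refine ⟨⟨⟨hki, hkA⟩, hlamik⟩, ?_, ?_⟩
        · intro f hf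
          have hfM := Finset.mem_of_mem_erase hf
          have hfe : f ≠ e := (Finset.mem_erase.1 hf).1
          obtain ⟨h1, h2, h3, h4⟩ := hM.1 f hfM
          have hdis := hM.2 f hfM e he hfe
          have hf1i : f.1 ≠ i := by
            rcases hkcase with ⟨hh, _⟩ | ⟨hh, _⟩
            · rw [← hh]; exact hdis.1
            · rw [← hh]; exact hdis.2.1
          have hf2i : f.2 ≠ i := by
            rcases hkcase with ⟨hh, _⟩ | ⟨hh, _⟩
            · rw [← hh]; exact hdis.2.2.1
            · rw [← hh]; exact hdis.2.2.2
          have hf1k : f.1 ≠ k := by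
            rcases hkcase with ⟨_, hh⟩ | ⟨_, hh⟩ <;> rw [hh]
            · exact hdis.2.1
            · exact hdis.1
          have hf2k : f.2 ≠ k := by
            rcases hkcase with ⟨_, hh⟩ | ⟨_, hh⟩ <;> rw [hh]
            · exact hdis.2.2.2
            · exact hdis.2.2.1
          exact ⟨h1, h2,
            Finset.mem_erase.2 ⟨hf1k, Finset.mem_erase.2 ⟨hf1i, h3⟩⟩,
            Finset.mem_erase.2 ⟨hf2k, Finset.mem_erase.2 ⟨hf2i, h4⟩⟩⟩
        · intro f hf g hg hfg
          exact hM.2 f (Finset.mem_of_mem_erase hf) g (Finset.mem_of_mem_erase hg) hfg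
      · show insert (pr i k) (M.erase e) = M
        rw [hpre, Finset.insert_erase he]
    · -- value equality
      rintro ⟨k, M⟩ hp
      simp only [Finset.mem_sigma, Finset.mem_filter, Finset.mem_erase, mem_matchings] at hp
      obtain ⟨⟨⟨hki, hkA⟩, hlik⟩, hM⟩ := hp
      have hMsub : ∀ e ∈ M, e.1 ≠ i ∧ e.1 ≠ k ∧ e.2 ≠ i ∧ e.2 ≠ k := by
        intro e he
        obtain ⟨_, _, h3, h4⟩ := hM.1 e he
        obtain ⟨h3k, h3'⟩ := Finset.mem_erase.1 h3
        obtain ⟨h4k, h4'⟩ := Finset.mem_erase.1 h4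
        exact ⟨(Finset.mem_erase.1 h3').1, h3k, (Finset.mem_erase.1 h4').1, h4k⟩
      have hprM : pr i k ∉ M := by
        intro hmem
        rcases pr_fst_or i k with h | h
        · exact (hMsub _ hmem).1 (by rw [h])
        · exact (hMsub _ hmem).2.2.1 (by rw [h])
      have hsets : A \ mVerts (insert (pr i k) M) = ((A.erase i).erase k) \ mVerts M := by
        rw [mVerts_insert_pr]
        ext v
        simp only [Finset.mem_sdiff, Finset.mem_insert, Finset.mem_erase, not_or]
        tauto
      have hprodeq : ∏ e ∈ insert (pr i k) M, lam e.1 e.2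
          = lam i k * ∏ e ∈ M, lam e.1 e.2 := by
        rw [Finset.prod_insert hprM]
        congr 1
        rcases pr_fst_or i k with h | h <;> rw [h]
        exact (hsym i k).symm ▸ rfl
      rw [hsets, hprodeq, map_mul]
      ring



/-- The Wronskian of two polynomials. -/
noncomputable def Wr (p q : Polynomial ℝ) : Polynomial ℝ :=
  p.derivative * q - p * q.derivative

/-- The interlacing invariant. -/
def Ilv (p q : Polynomial ℝ) : Prop :=
  p ≠ 0 ∧ q ≠ 0 ∧ (∀ x : ℝ, 0 ≤ (Wr p q).eval x) ∧
  ∀ θ : ℝ, p.rootMultiplicity θ ≤ q.rootMultiplicity θ + 1 ∧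
    q.rootMultiplicity θ ≤ p.rootMultiplicity θ + 1

lemma pow_dvd_derivative {θ : ℝ} {p : Polynomial ℝ} {m : ℕ}
    (h : (X - C θ) ^ (m + 1) ∣ p) : (X - C θ) ^ m ∣ p.derivative := by
  obtain ⟨g, rfl⟩ := h
  rw [derivative_mul, derivative_pow, derivative_X_sub_C]
  refine dvd_add ⟨C ((m : ℝ) + 1) * g, ?_⟩ ⟨(X - C θ) * derivative g, ?_⟩
  · simp only [Nat.add_sub_cancel, mul_one]
    push_cast
    ring
  · ring

lemma root_between {p q : Polynomial ℝ} (hp : p ≠ 0)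
    (hW : ∀ x : ℝ, 0 ≤ (Wr p q).eval x) {a b : ℝ} (hab : a < b)
    (ha : p.IsRoot a) (hb : p.IsRoot b) : ∃ c, a ≤ c ∧ c ≤ b ∧ q.IsRoot c := by
  by_contra hcon
  push_neg at hcon
  have hq : ∀ x ∈ Set.Icc a b, q.eval x ≠ 0 := fun x hx h0 => hcon x hx.1 hx.2 h0
  set h : ℝ → ℝ := fun x => p.eval x / q.eval x with hh
  have hderiv : ∀ x ∈ Set.Icc a b,
      HasDerivAt h ((Wr p q).eval x / (q.eval x) ^ 2) x := by
    intro x hx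
    have := (p.hasDerivAt x).div (q.hasDerivAt x) (hq x hx)
    rw [show (Wr p q).eval x = (derivative p).eval x * q.eval x - p.eval x * (derivative q).eval x by simp [Wr]]
    convert this using 1 <;> rfl
  have hmono : MonotoneOn h (Set.Icc a b) := by
    apply monotoneOn_of_deriv_nonneg (convex_Icc a b)
    · exact ContinuousOn.div (p.continuous.continuousOn) (q.continuous.continuousOn) hq
    · intro x hx
      rw [interior_Icc] at hx
      exact (hderiv x (Set.mem_Icc_of_Ioo hx)).differentiableAt.differentiableWithinAt
    · intro x hx
      rw [interior_Icc] at hx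
      rw [(hderiv x (Set.mem_Icc_of_Ioo hx)).deriv]
      exact div_nonneg (hW x) (sq_nonneg _)
  have hma : h a = 0 := by simp [hh, ha.eq_zero]
  have hmb : h b = 0 := by simp [hh, hb.eq_zero]
  have hzero : ∀ x ∈ Set.Icc a b, p.eval x = 0 := by
    intro x hx
    have h1 : h a ≤ h x := hmono (Set.left_mem_Icc.2 hab.le) hx hx.1
    have h2 : h x ≤ h b := hmono hx (Set.right_mem_Icc.2 hab.le) hx.2
    have hx0 : h x = 0 := le_antisymm (hmb ▸ h2) (hma ▸ h1)
    rcases div_eq_zero_iff.1 hx0 with h0 | h0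
    · exact h0
    · exact absurd h0 (hq x hx)
  apply hp
  apply Polynomial.eq_zero_of_infinite_isRoot
  exact Set.Infinite.mono (fun x hx => hzero x hx) (Set.Icc_infinite hab)

lemma ilv_step {ι : Type} (c : ℝ) {q : Polynomial ℝ} {s : Finset ι} {l : ι → ℝ}
    {g : ι → Polynomial ℝ} {p : Polynomial ℝ} (hq : q ≠ 0) (hp0 : p ≠ 0)
    (hl : ∀ k ∈ s, l k ≤ 0) (hg : ∀ k ∈ s, Ilv q (g k))
    (hp : p = (X - C c) * q + ∑ k ∈ s, C (l k) * g k) : Ilv p q := by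
  classical
  have e1 : p.derivative = q + (X - C c) * q.derivative
      + ∑ k ∈ s, C (l k) * (g k).derivative := by
    rw [hp, derivative_add, derivative_mul, derivative_sum]
    simp only [derivative_sub, derivative_X, derivative_C, sub_zero, one_mul]
    congr 1
    apply Finset.sum_congr rfl
    intro k _
    rw [derivative_mul, derivative_C, zero_mul, zero_add]
  have step : (∑ k ∈ s, C (-(l k)) * Wr q (g k))
      = (∑ k ∈ s, C (l k) * (g k).derivative) * q
        - (∑ k ∈ s, C (l k) * g k) * q.derivative := by
    rw [Finset.sum_mul, Finset.sum_mul, ← Finset.sum_sub_distrib]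
    apply Finset.sum_congr rfl
    intro k _
    simp only [Wr, map_neg]
    ring
  have key : Wr p q = q ^ 2 + ∑ k ∈ s, C (-(l k)) * Wr q (g k) := by
    rw [step]
    unfold Wr
    rw [e1, hp]
    ring
  have hWge : ∀ x : ℝ, q.eval x ^ 2 ≤ (Wr p q).eval x := by
    intro x
    rw [key]
    rw [Polynomial.eval_add, Polynomial.eval_pow, Polynomial.eval_finset_sum]
    have h0 : 0 ≤ ∑ k ∈ s, ((C (-(l k)) * Wr q (g k)).eval x) := by
      apply Finset.sum_nonneg
      intro k hk
      rw [Polynomial.eval_mul, Polynomial.eval_C]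
      exact mul_nonneg (neg_nonneg.2 (hl k hk)) ((hg k hk).2.2.1 x)
    linarith
  refine ⟨hp0, hq, fun x => le_trans (sq_nonneg _) (hWge x), fun θ => ?_⟩
  constructor
  · -- p.rootMultiplicity θ ≤ q.rootMultiplicity θ + 1
    by_contra hcon
    push_neg at hcon
    have hdvdp : (X - C θ) ^ (q.rootMultiplicity θ + 2) ∣ p :=
      (Polynomial.le_rootMultiplicity_iff hp0 (n := q.rootMultiplicity θ + 2)).1 (by omega)
    have hdvdq : (X - C θ) ^ (q.rootMultiplicity θ) ∣ q :=
      Polynomial.pow_rootMultiplicity_dvd q θ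
    have hW1 : (X - C θ) ^ (2 * q.rootMultiplicity θ + 1) ∣ Wr p q := by
      unfold Wr
      apply dvd_sub
      · have h1 : (X - C θ) ^ (q.rootMultiplicity θ + 1) ∣ p.derivative :=
          pow_dvd_derivative (by
            have : q.rootMultiplicity θ + 2 = (q.rootMultiplicity θ + 1) + 1 := by omega
            rwa [this] at hdvdp)
        have harith : 2 * q.rootMultiplicity θ + 1
            = (q.rootMultiplicity θ + 1) + q.rootMultiplicity θ := by omega
        rw [harith, pow_add]
        exact mul_dvd_mul h1 hdvdq
      · rcases Nat.eq_zero_or_pos (q.rootMultiplicity θ) with hb | hb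
        · have h4 : (X - C θ) ^ (2 * q.rootMultiplicity θ + 1) ∣ p :=
            (pow_dvd_pow _ (by omega)).trans hdvdp
          exact h4.mul_right _
        · obtain ⟨b', hb'⟩ := Nat.exists_eq_add_of_lt hb
          rw [zero_add] at hb'
          have h2 : (X - C θ) ^ b' ∣ q.derivative :=
            pow_dvd_derivative (by rwa [← hb'])
          have harith : 2 * q.rootMultiplicity θ + 1
              = (q.rootMultiplicity θ + 2) + b' := by omega
          rw [harith, pow_add]
          exact mul_dvd_mul hdvdp h2
    obtain ⟨h₁, hWeq⟩ := hW1
    have hvq : (X - C θ) ^ (q.rootMultiplicity θ)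
        * (q /ₘ (X - C θ) ^ (q.rootMultiplicity θ)) = q :=
      Polynomial.pow_mul_divByMonic_rootMultiplicity_eq q θ
    set v := q /ₘ (X - C θ) ^ (q.rootMultiplicity θ) with hv
    have hv0 : v.eval θ ≠ 0 := Polynomial.eval_divByMonic_pow_rootMultiplicity_ne_zero θ hq
    have hle : ∀ x : ℝ, θ < x → (v.eval x) ^ 2 ≤ (x - θ) * h₁.eval x := by
      intro x hx
      have h2 := hWge x
      rw [hWeq] at h2
      have hq' : q.eval x = (x - θ) ^ (q.rootMultiplicity θ) * v.eval x := by
        conv_lhs => rw [← hvq]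
        simp
      rw [hq'] at h2
      simp only [Polynomial.eval_mul, Polynomial.eval_pow, Polynomial.eval_sub,
        Polynomial.eval_X, Polynomial.eval_C] at h2
      have h3 : (x - θ) ^ (2 * q.rootMultiplicity θ) * (v.eval x) ^ 2
          ≤ (x - θ) ^ (2 * q.rootMultiplicity θ) * ((x - θ) * h₁.eval x) := by
        calc (x - θ) ^ (2 * q.rootMultiplicity θ) * (v.eval x) ^ 2
            = ((x - θ) ^ (q.rootMultiplicity θ) * v.eval x) ^ 2 := by
              rw [mul_pow, ← pow_mul]; ring_nf
          _ ≤ (x - θ) ^ (2 * q.rootMultiplicity θ + 1) * h₁.eval x := h2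
          _ = (x - θ) ^ (2 * q.rootMultiplicity θ) * ((x - θ) * h₁.eval x) := by
              rw [pow_succ]; ring
      exact le_of_mul_le_mul_left h3 (pow_pos (sub_pos.2 hx) _)
    have t1 : Filter.Tendsto (fun x : ℝ => (v.eval x) ^ 2)
        (nhdsWithin θ (Set.Ioi θ)) (nhds ((v.eval θ) ^ 2)) := by
      exact (((v.continuous).pow 2).tendsto θ).mono_left nhdsWithin_le_nhds
    have t2 : Filter.Tendsto (fun x : ℝ => (x - θ) * h₁.eval x)
        (nhdsWithin θ (Set.Ioi θ)) (nhds 0) := by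
      have hc : Continuous fun x : ℝ => (x - θ) * h₁.eval x :=
        (continuous_id.sub continuous_const).mul h₁.continuous
      have h0 := hc.tendsto θ
      simp only [sub_self, zero_mul] at h0
      exact h0.mono_left nhdsWithin_le_nhds
    have hle2 : (v.eval θ) ^ 2 ≤ 0 := by
      refine le_of_tendsto_of_tendsto t1 t2 ?_
      filter_upwards [self_mem_nhdsWithin] with x hx
      exact hle x hx
    have : v.eval θ = 0 := by
      have := le_antisymm hle2 (sq_nonneg _)
      exact pow_eq_zero_iff two_ne_zero |>.1 this
    exact hv0 this
  · -- q.rootMultiplicity θ ≤ p.rootMultiplicity θ + 1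
    rcases Nat.eq_zero_or_pos (q.rootMultiplicity θ) with hb | hb
    · omega
    · obtain ⟨b', hb'⟩ := Nat.exists_eq_add_of_lt hb
      rw [zero_add] at hb'
      have hdvd : (X - C θ) ^ b' ∣ p := by
        rw [hp]
        apply dvd_add
        · apply Dvd.dvd.mul_left
          exact (pow_dvd_pow _ (by omega)).trans (Polynomial.pow_rootMultiplicity_dvd q θ)
        · apply Finset.dvd_sum
          intro k hk
          apply Dvd.dvd.mul_left
          have hk1 := ((hg k hk).2.2.2 θ).1
          exact (pow_dvd_pow _ (by omega)).trans (Polynomial.pow_rootMultiplicity_dvd (g k) θ)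
      have := (Polynomial.le_rootMultiplicity_iff hp0).2 hdvd
      omega

lemma mu_ilv {n : ℕ} (r : Fin n → ℝ) (lam : Fin n → Fin n → ℝ)
    (hsym : ∀ j k, lam j k = lam k j) (hnonpos : ∀ j k, lam j k ≤ 0) :
    ∀ (N : ℕ) (A : Finset (Fin n)), A.card ≤ N → ∀ i ∈ A,
      Ilv (mu r lam A) (mu r lam (A.erase i)) := by
  intro N
  induction N with
  | zero =>
    intro A hA i hi
    exact absurd (Finset.card_pos.2 ⟨i, hi⟩) (by omega)
  | succ N ih =>
    intro A hA i hi
    refine ilv_step (r i) (mu_ne_zero r lam _) (mu_ne_zero r lam _)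
      (fun k _ => hnonpos i k) ?_ (mu_rec r lam hsym hi)
    intro k hk
    have h1 : 0 < A.card := Finset.card_pos.2 ⟨i, hi⟩
    have hcard : (A.erase i).card ≤ N := by
      rw [Finset.card_erase_of_mem hi]
      omega
    exact ih (A.erase i) hcard k hk

end Stmt6

/-- (Interlacing) between any two roots of `μ(G)` there is a root of
`μ(G∖i)` and vice versa; moreover `m_θ(G∖i) ∈ {m_θ(G) − 1, m_θ(G), m_θ(G) + 1}`. -/
theorem stmt_6 (n : ℕ) (hn : 0 < n) (r : Fin n → ℝ) (lam : Fin n → Fin n → ℝ)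
    (hsym : ∀ j k, lam j k = lam k j) (hnonpos : ∀ j k, lam j k ≤ 0)
    (hdiag : ∀ i, lam i i = 0) (i : Fin n) :
    (∀ a b : ℝ, a < b →
        (mu r lam (Finset.univ : Finset (Fin n))).IsRoot a →
        (mu r lam Finset.univ).IsRoot b →
        ∃ c : ℝ, a ≤ c ∧ c ≤ b ∧ (mu r lam (Finset.univ.erase i)).IsRoot c) ∧
    (∀ a b : ℝ, a < b →
        (mu r lam (Finset.univ.erase i)).IsRoot a →
        (mu r lam (Finset.univ.erase i)).IsRoot b →
        ∃ c : ℝ, a ≤ c ∧ c ≤ b ∧ (mu r lam Finset.univ).IsRoot c) ∧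
    (∀ θ : ℝ,
      (mu r lam (Finset.univ.erase i)).rootMultiplicity θ + 1 =
          (mu r lam Finset.univ).rootMultiplicity θ ∨
      (mu r lam (Finset.univ.erase i)).rootMultiplicity θ =
          (mu r lam Finset.univ).rootMultiplicity θ ∨
      (mu r lam (Finset.univ.erase i)).rootMultiplicity θ =
          (mu r lam Finset.univ).rootMultiplicity θ + 1) := by
  obtain ⟨hp0, hq0, hW, hmult⟩ :=
    Stmt6.mu_ilv r lam hsym hnonpos (Finset.univ.card) Finset.univ le_rfl i
      (Finset.mem_univ i)
  refine ⟨?_, ?_, ?_⟩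
  · intro a b hab ha hb
    exact Stmt6.root_between hp0 hW hab ha hb
  · intro a b hab ha hb
    have hW' : ∀ x : ℝ,
        0 ≤ (Stmt6.Wr (mu r lam (Finset.univ.erase i)) (-(mu r lam Finset.univ))).eval x := by
      intro x
      have h := hW x
      simp only [Stmt6.Wr, Polynomial.derivative_neg, Polynomial.eval_sub,
        Polynomial.eval_mul, Polynomial.eval_neg] at h ⊢
      linarith
    obtain ⟨c, h1, h2, h3⟩ := Stmt6.root_between hq0 hW' hab ha hb
    refine ⟨c, h1, h2, ?_⟩
    have : (-(mu r lam Finset.univ)).eval c = 0 := h3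
    simpa using this
  · intro θ
    have h := hmult θ
    omega
end

section
/- For any weighted graph G, vertex i, and real number θ: m_θ(G∖i) = m_θ(G) + 1 if and only if there is a neighbor j of i with m_θ(G∖{i,j}) = m_θ(G∖i) − 1 (i.e., i ∈ ∞_{θ,G} if and only if some neighbor of i lies in 0_{θ,G∖i}). -/
open Polynomial
open scoped Classical

namespace S8
open Finset
variable {n : ℕ} {r : Fin n → ℝ} {lam : Fin n → Fin n → ℝ}

lemma mem_matchings {A : Finset (Fin n)} {M} :
    M ∈ matchings lam A ↔ IsMatching lam A M := by
  simp [matchings]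

lemma mem_mVerts {M : Finset (Fin n × Fin n)} {v : Fin n} :
    v ∈ mVerts M ↔ ∃ e ∈ M, e.1 = v ∨ e.2 = v := by
  simp only [mVerts, Finset.mem_union, Finset.mem_image]
  constructor
  · rintro (⟨e, he, h⟩ | ⟨e, he, h⟩)
    · exact ⟨e, he, Or.inl h⟩
    · exact ⟨e, he, Or.inr h⟩
  · rintro ⟨e, he, h | h⟩
    · exact Or.inl ⟨e, he, h⟩
    · exact Or.inr ⟨e, he, h⟩

/-- the ordered pair -/
def pr (i j : Fin n) : Fin n × Fin n := if i < j then (i, j) else (j, i)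

lemma pr_cases {i j : Fin n} (h : i ≠ j) :
    (pr i j = (i, j) ∧ i < j) ∨ (pr i j = (j, i) ∧ j < i) := by
  rcases lt_or_gt_of_ne h with h1 | h1
  · exact Or.inl ⟨if_pos h1, h1⟩
  · exact Or.inr ⟨if_neg (by exact not_lt_of_gt h1), h1⟩


lemma mVerts_insert {e : Fin n × Fin n} {S : Finset (Fin n × Fin n)} :
    mVerts (insert e S) = insert e.1 (insert e.2 (mVerts S)) := by
  simp only [mVerts, Finset.image_insert]
  ext v
  simp only [Finset.mem_union, Finset.mem_insert]
  tauto

lemma pr_lam (hsym : ∀ j k, lam j k = lam k j) {i j : Fin n} (h : i ≠ j) :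
    lam (pr i j).1 (pr i j).2 = lam i j := by
  rcases pr_cases h with ⟨hpe, _⟩ | ⟨hpe, _⟩ <;> rw [hpe]
  exact hsym j i

lemma havoid_of_matching {A : Finset (Fin n)} {i j : Fin n} {M' : Finset (Fin n × Fin n)}
    (hM' : IsMatching lam ((A.erase i).erase j) M') :
    ∀ e ∈ M', e.1 ≠ i ∧ e.2 ≠ i ∧ e.1 ≠ j ∧ e.2 ≠ j := by
  intro e he
  obtain ⟨_, _, h1, h2⟩ := hM'.1 e he
  have h1' := Finset.mem_erase.1 h1
  have h2' := Finset.mem_erase.1 h2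
  have h1'' := Finset.mem_erase.1 h1'.2
  have h2'' := Finset.mem_erase.1 h2'.2
  exact ⟨h1''.1, h2''.1, h1'.1, h2'.1⟩

lemma pr_not_mem {i j : Fin n} {M' : Finset (Fin n × Fin n)}
    (hav : ∀ e ∈ M', e.1 ≠ i ∧ e.2 ≠ i ∧ e.1 ≠ j ∧ e.2 ≠ j) (h : i ≠ j) :
    pr i j ∉ M' := by
  intro hmem
  obtain ⟨ha1, ha2, _, _⟩ := hav _ hmem
  rcases pr_cases h with ⟨hpe, _⟩ | ⟨hpe, _⟩ <;> rw [hpe] at ha1 ha2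
  · exact ha1 rfl
  · exact ha2 rfl

lemma mu_rec (hsym : ∀ j k, lam j k = lam k j) {A : Finset (Fin n)} {i : Fin n}
    (hi : i ∈ A) :
    mu r lam A = (X - C (r i)) * mu r lam (A.erase i)
      + ∑ j ∈ A.erase i, C (lam i j) * mu r lam ((A.erase i).erase j) := by
  classical
  -- part 1 : matchings not covering i
  have hfilt : (matchings lam A).filter (fun M => ¬ i ∈ mVerts M)
      = matchings lam (A.erase i) := by
    ext M
    simp only [Finset.mem_filter, mem_matchings]
    constructor
    · rintro ⟨⟨h1, h2⟩, hiM⟩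
      refine ⟨fun e he => ?_, h2⟩
      obtain ⟨hlt, hne, ha1, ha2⟩ := h1 e he
      have hi1 : e.1 ≠ i := fun h => hiM (mem_mVerts.2 ⟨e, he, Or.inl h⟩)
      have hi2 : e.2 ≠ i := fun h => hiM (mem_mVerts.2 ⟨e, he, Or.inr h⟩)
      exact ⟨hlt, hne, Finset.mem_erase.2 ⟨hi1, ha1⟩, Finset.mem_erase.2 ⟨hi2, ha2⟩⟩
    · rintro ⟨h1, h2⟩
      refine ⟨⟨fun e he => ?_, h2⟩, ?_⟩
      · obtain ⟨hlt, hne, ha1, ha2⟩ := h1 e he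
        exact ⟨hlt, hne, (Finset.mem_erase.1 ha1).2, (Finset.mem_erase.1 ha2).2⟩
      · intro hmem
        obtain ⟨e, he, h⟩ := mem_mVerts.1 hmem
        obtain ⟨hlt, hne, ha1, ha2⟩ := h1 e he
        rcases h with h | h
        · exact (Finset.mem_erase.1 ha1).1 h
        · exact (Finset.mem_erase.1 ha2).1 h
  have hpart1 : ∑ M ∈ (matchings lam A).filter (fun M => ¬ i ∈ mVerts M),
      (∏ v ∈ A \ mVerts M, (X - C (r v))) * C (∏ e ∈ M, lam e.1 e.2)
      = (X - C (r i)) * mu r lam (A.erase i) := by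
    rw [hfilt, mu, Finset.mul_sum]
    refine Finset.sum_congr rfl fun M hM => ?_
    have hMm := mem_matchings.1 hM
    have hiM : i ∉ mVerts M := by
      intro hmem
      obtain ⟨e, he, h⟩ := mem_mVerts.1 hmem
      obtain ⟨hlt, hne, ha1, ha2⟩ := hMm.1 e he
      rcases h with h | h
      · exact (Finset.mem_erase.1 ha1).1 h
      · exact (Finset.mem_erase.1 ha2).1 h
    have hset : (A \ mVerts M).erase i = (A.erase i) \ mVerts M := by
      ext v
      simp only [Finset.mem_erase, Finset.mem_sdiff]
      tauto
    have hmem : i ∈ A \ mVerts M := Finset.mem_sdiff.2 ⟨hi, hiM⟩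
    rw [← Finset.mul_prod_erase _ _ hmem, hset, mul_assoc]
  -- part 2 : matchings covering i
  have hpart2 : ∑ M ∈ (matchings lam A).filter (fun M => i ∈ mVerts M),
      (∏ v ∈ A \ mVerts M, (X - C (r v))) * C (∏ e ∈ M, lam e.1 e.2)
      = ∑ j ∈ A.erase i, C (lam i j) * mu r lam ((A.erase i).erase j) := by
    have hres : ∑ j ∈ (A.erase i).filter (fun j => lam i j ≠ 0),
        C (lam i j) * mu r lam ((A.erase i).erase j)
        = ∑ j ∈ A.erase i, C (lam i j) * mu r lam ((A.erase i).erase j) := by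
      refine Finset.sum_filter_of_ne fun j hj hne h0 => ?_
      rw [h0, map_zero, zero_mul] at hne
      exact hne rfl
    rw [← hres]
    -- expand mu and use a sigma-type bijection
    have hexp : ∀ j, C (lam i j) * mu r lam ((A.erase i).erase j)
        = ∑ M' ∈ matchings lam ((A.erase i).erase j),
            C (lam i j) * ((∏ v ∈ ((A.erase i).erase j) \ mVerts M', (X - C (r v)))
              * C (∏ e ∈ M', lam e.1 e.2)) := by
      intro j
      rw [mu, Finset.mul_sum]
    simp only [hexp]
    rw [Finset.sum_sigma']
    refine (Finset.sum_nbij (fun x => insert (pr i x.1) x.2) ?_ ?_ ?_ ?_).symm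
    · -- membership
      rintro ⟨j, M'⟩ hx
      rw [Finset.mem_sigma] at hx
      obtain ⟨hj1, hM'1⟩ := hx
      rw [Finset.mem_filter] at hj1
      obtain ⟨hjA, hlam⟩ := hj1
      have hMm := mem_matchings.1 hM'1
      have hji : j ≠ i := (Finset.mem_erase.1 hjA).1
      have hij : i ≠ j := Ne.symm hji
      have hjA' : j ∈ A := (Finset.mem_erase.1 hjA).2
      have hav := havoid_of_matching hMm
      rw [Finset.mem_filter, mem_matchings]
      refine ⟨⟨?_, ?_⟩, ?_⟩
      · intro e he
        rw [Finset.mem_insert] at he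
        rcases he with rfl | he
        · rcases pr_cases hij with ⟨hpe, hlt⟩ | ⟨hpe, hlt⟩ <;> rw [hpe]
          · exact ⟨hlt, hlam, hi, hjA'⟩
          · refine ⟨hlt, ?_, hjA', hi⟩
            rw [hsym j i]
            exact hlam
        · obtain ⟨hlt, hne0, h1, h2⟩ := hMm.1 e he
          exact ⟨hlt, hne0, (Finset.mem_erase.1 (Finset.mem_erase.1 h1).2).2,
            (Finset.mem_erase.1 (Finset.mem_erase.1 h2).2).2⟩
      · intro e he f hf hef
        rw [Finset.mem_insert] at he hf
        rcases he with rfl | he <;> rcases hf with rfl | hf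
        · exact absurd rfl hef
        · obtain ⟨hf1, hf2, hf3, hf4⟩ := hav f hf
          rcases pr_cases hij with ⟨hpe, _⟩ | ⟨hpe, _⟩ <;> rw [hpe]
          · exact ⟨Ne.symm hf1, Ne.symm hf2, Ne.symm hf3, Ne.symm hf4⟩
          · exact ⟨Ne.symm hf3, Ne.symm hf4, Ne.symm hf1, Ne.symm hf2⟩
        · obtain ⟨he1, he2, he3, he4⟩ := hav e he
          rcases pr_cases hij with ⟨hpe, _⟩ | ⟨hpe, _⟩ <;> rw [hpe]
          · exact ⟨he1, he3, he2, he4⟩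
          · exact ⟨he3, he1, he4, he2⟩
        · exact hMm.2 e he f hf hef
      · refine mem_mVerts.2 ⟨pr i j, Finset.mem_insert_self _ _, ?_⟩
        rcases pr_cases hij with ⟨hpe, _⟩ | ⟨hpe, _⟩ <;> rw [hpe]
        · exact Or.inl rfl
        · exact Or.inr rfl
    · -- injectivity
      rintro ⟨j, M'⟩ hx ⟨k, N'⟩ hy heq
      simp only [Finset.coe_sigma, Set.mem_sigma_iff, Finset.mem_coe,
        Finset.mem_filter] at hx hy
      obtain ⟨⟨hjA, hjlam⟩, hM'1⟩ := hx
      obtain ⟨⟨hkA, hklam⟩, hN'1⟩ := hy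
      have hji : j ≠ i := (Finset.mem_erase.1 hjA).1
      have hki : k ≠ i := (Finset.mem_erase.1 hkA).1
      have havj := havoid_of_matching (mem_matchings.1 hM'1)
      have havk := havoid_of_matching (mem_matchings.1 hN'1)
      simp only at heq
      have hprmem : pr i j ∈ insert (pr i k) N' := by
        rw [← heq]; exact Finset.mem_insert_self _ _
      rw [Finset.mem_insert] at hprmem
      have hpreq : pr i j = pr i k := by
        rcases hprmem with h | h
        · exact h
        · obtain ⟨ha1, ha2, _, _⟩ := havk _ h
          rcases pr_cases (Ne.symm hji) with ⟨hpe, _⟩ | ⟨hpe, _⟩ <;> rw [hpe] at ha1 ha2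
          · exact absurd rfl ha1
          · exact absurd rfl ha2
      have hjk : j = k := by
        rcases pr_cases (Ne.symm hji) with ⟨hpe, _⟩ | ⟨hpe, _⟩ <;>
          rcases pr_cases (Ne.symm hki) with ⟨hpe', _⟩ | ⟨hpe', _⟩ <;>
            rw [hpe, hpe'] at hpreq <;>
              [skip; skip; skip; skip] <;>
          · obtain ⟨h1, h2⟩ := Prod.mk.injEq .. ▸ hpreq
            first
              | exact (Prod.ext_iff.1 hpreq).2
              | omega
      subst hjk
      have hM'N' : M' = N' := by
        have h1 : pr i j ∉ M' := pr_not_mem havj (Ne.symm hji)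
        have h2 : pr i j ∉ N' := pr_not_mem havk (Ne.symm hji)
        have := heq
        rw [← Finset.erase_insert h1, this, Finset.erase_insert h2]
      subst hM'N'
      rfl
    · -- surjectivity
      intro M hM
      simp only [Finset.coe_filter, Set.mem_setOf_eq, Finset.mem_coe] at hM
      obtain ⟨hMm1, hicov⟩ := hM
      have hMm := mem_matchings.1 hMm1
      obtain ⟨e, he, hecov⟩ := mem_mVerts.1 hicov
      obtain ⟨hlt, hlam0, heA1, heA2⟩ := hMm.1 e he
      -- the other endpoint
      set j : Fin n := if e.1 = i then e.2 else e.1 with hjdef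
      have hkey : pr i j = e ∧ j ≠ i ∧ j ∈ A ∧ lam i j ≠ 0 := by
        rcases hecov with h1 | h1
        · have hj : j = e.2 := by rw [hjdef, if_pos h1]
          have hilt : i < e.2 := h1 ▸ hlt
          refine ⟨?_, ?_, ?_, ?_⟩
          · rw [hj, pr, if_pos hilt, ← h1]
          · rw [hj]; exact Ne.symm (ne_of_lt hilt)
          · rw [hj]; exact heA2
          · rw [hj, ← h1]; exact hlam0
        · have hne1 : e.1 ≠ i := by
            intro h
            rw [h, h1] at hlt
            exact lt_irrefl _ hlt
          have hj : j = e.1 := by rw [hjdef, if_neg hne1]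
          have hilt : e.1 < i := h1 ▸ hlt
          refine ⟨?_, ?_, ?_, ?_⟩
          · have : ¬ i < j := by rw [hj]; exact not_lt_of_gt hilt
            rw [pr, if_neg this, hj, ← h1]
          · rw [hj]; exact ne_of_lt hilt
          · rw [hj]; exact heA1
          · rw [hj, hsym i e.1, ← h1]; exact hlam0
      obtain ⟨hpre, hjne, hjA, hjlam⟩ := hkey
      refine ⟨⟨j, M.erase e⟩, ?_, ?_⟩
      · simp only [Finset.coe_sigma, Set.mem_sigma_iff, Finset.mem_coe,
          Finset.mem_filter]
        refine ⟨⟨Finset.mem_erase.2 ⟨hjne, hjA⟩, hjlam⟩, mem_matchings.2 ⟨?_, ?_⟩⟩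
        · intro f hf
          have hfM := Finset.mem_of_mem_erase hf
          have hfe : f ≠ e := Finset.ne_of_mem_erase hf
          obtain ⟨hflt, hflam, hf1, hf2⟩ := hMm.1 f hfM
          obtain ⟨hd1, hd2, hd3, hd4⟩ := hMm.2 f hfM e he hfe
          have hji2 : e.1 = i ∨ e.2 = i := hecov
          have hj2 : e.1 = j ∨ e.2 = j := by
            rcases hecov with h1 | h1
            · right
              rw [hjdef, if_pos h1]
            · left
              have hne1 : e.1 ≠ i := by
                intro h
                rw [h, h1] at hlt
                exact lt_irrefl _ hlt
              rw [hjdef, if_neg hne1]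
          have hfi1 : f.1 ≠ i := by
            rcases hji2 with h | h
            · exact h ▸ hd1
            · exact h ▸ hd2
          have hfi2 : f.2 ≠ i := by
            rcases hji2 with h | h
            · exact h ▸ hd3
            · exact h ▸ hd4
          have hfj1 : f.1 ≠ j := by
            rcases hj2 with h | h
            · exact h ▸ hd1
            · exact h ▸ hd2
          have hfj2 : f.2 ≠ j := by
            rcases hj2 with h | h
            · exact h ▸ hd3
            · exact h ▸ hd4
          exact ⟨hflt, hflam, Finset.mem_erase.2 ⟨hfj1, Finset.mem_erase.2 ⟨hfi1, hf1⟩⟩,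
            Finset.mem_erase.2 ⟨hfj2, Finset.mem_erase.2 ⟨hfi2, hf2⟩⟩⟩
        · intro f hf g hg hfg
          exact hMm.2 f (Finset.mem_of_mem_erase hf) g (Finset.mem_of_mem_erase hg) hfg
      · simp only
        rw [hpre, Finset.insert_erase he]
    · -- value equality
      rintro ⟨j, M'⟩ hx
      rw [Finset.mem_sigma] at hx
      obtain ⟨hj1, hM'1⟩ := hx
      rw [Finset.mem_filter] at hj1
      obtain ⟨hjA, hlam⟩ := hj1
      have hji : j ≠ i := (Finset.mem_erase.1 hjA).1
      have hij : i ≠ j := Ne.symm hji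
      have hav := havoid_of_matching (mem_matchings.1 hM'1)
      have hnm : pr i j ∉ M' := pr_not_mem hav hij
      simp only
      rw [Finset.prod_insert hnm, pr_lam hsym hij]
      have hset : A \ mVerts (insert (pr i j) M') = ((A.erase i).erase j) \ mVerts M' := by
        rw [mVerts_insert]
        rcases pr_cases hij with ⟨hpe, _⟩ | ⟨hpe, _⟩ <;> rw [hpe] <;> ext v <;>
          simp only [Finset.mem_sdiff, Finset.mem_erase, Finset.mem_insert] <;>
          constructor
        · rintro ⟨hvA, hv⟩
          push_neg at hv
          exact ⟨⟨hv.2.1, hv.1, hvA⟩, hv.2.2⟩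
        · rintro ⟨⟨hvj, hvi, hvA⟩, hv⟩
          exact ⟨hvA, by push_neg; exact ⟨hvi, hvj, hv⟩⟩
        · rintro ⟨hvA, hv⟩
          push_neg at hv
          exact ⟨⟨hv.1, hv.2.1, hvA⟩, hv.2.2⟩
        · rintro ⟨⟨hvj, hvi, hvA⟩, hv⟩
          exact ⟨hvA, by push_neg; exact ⟨hvj, hvi, hv⟩⟩
      rw [hset, map_mul]
      ring
  rw [mu, ← Finset.sum_filter_add_sum_filter_not (matchings lam A)
    (fun M => i ∈ mVerts M), hpart1, hpart2]
  ring

lemma matchings_empty : matchings lam (∅ : Finset (Fin n)) = {∅} := by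
  ext M
  simp only [Finset.mem_singleton, mem_matchings]
  constructor
  · intro h
    exact Finset.eq_empty_iff_forall_notMem.2 fun e he =>
      absurd (h.1 e he).2.2.1 (Finset.notMem_empty _)
  · rintro rfl
    exact ⟨fun e he => absurd he (Finset.notMem_empty _),
      fun e he => absurd he (Finset.notMem_empty _)⟩

lemma mu_empty : mu r lam (∅ : Finset (Fin n)) = 1 := by
  rw [mu, matchings_empty, Finset.sum_singleton]
  simp

lemma HL (hsym : ∀ j k, lam j k = lam k j) (hnonpos : ∀ j k, lam j k ≤ 0)
    (A : Finset (Fin n)) :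
    ∀ z : ℂ, 0 < z.im → (Polynomial.aeval z (mu r lam A) ≠ 0 ∧
      ∀ i ∈ A, z.im ≤ ((Polynomial.aeval z (mu r lam A)) /
        (Polynomial.aeval z (mu r lam (A.erase i)))).im) := by
  induction A using Finset.strongInduction with
  | _ A ih =>
    intro z hz
    have hratio : ∀ i ∈ A, z.im ≤ ((Polynomial.aeval z (mu r lam A)) /
        (Polynomial.aeval z (mu r lam (A.erase i)))).im := by
      intro i hi
      set B := A.erase i with hB
      have hBA : B ⊂ A := Finset.erase_ssubset hi
      have ihB := ih B hBA z hz
      have hD : Polynomial.aeval z (mu r lam B) ≠ 0 := ihB.1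
      have heval : Polynomial.aeval z (mu r lam A)
          = (z - (r i : ℂ)) * Polynomial.aeval z (mu r lam B)
            + ∑ j ∈ B, ((lam i j : ℝ) : ℂ) * Polynomial.aeval z (mu r lam (B.erase j)) := by
        rw [mu_rec hsym hi]
        simp [map_add, map_sum, map_mul, map_sub]
        rfl
      have hdiv : (Polynomial.aeval z (mu r lam A)) / (Polynomial.aeval z (mu r lam B))
          = (z - (r i : ℂ)) + ∑ j ∈ B, ((lam i j : ℝ) : ℂ) *
              (Polynomial.aeval z (mu r lam (B.erase j)) / Polynomial.aeval z (mu r lam B)) := by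
        rw [heval, add_div, mul_div_cancel_right₀ _ hD, Finset.sum_div]
        congr 1
        exact Finset.sum_congr rfl fun j hj => by rw [mul_div_assoc]
      rw [hdiv, Complex.add_im]
      have him : (z - (r i : ℂ)).im = z.im := by simp
      rw [him, Complex.im_sum]
      refine le_add_of_nonneg_right (Finset.sum_nonneg fun j hj => ?_)
      have hEj : Polynomial.aeval z (mu r lam (B.erase j)) ≠ 0 :=
        (ih (B.erase j) (lt_of_lt_of_le (Finset.erase_ssubset hj) hBA.subset) z hz).1
      have hwim : z.im ≤ ((Polynomial.aeval z (mu r lam B)) /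
          (Polynomial.aeval z (mu r lam (B.erase j)))).im := ihB.2 j hj
      set w : ℂ := (Polynomial.aeval z (mu r lam B)) /
          (Polynomial.aeval z (mu r lam (B.erase j))) with hw
      have hwne : w ≠ 0 := div_ne_zero hD hEj
      have hinv : Polynomial.aeval z (mu r lam (B.erase j)) /
          Polynomial.aeval z (mu r lam B) = w⁻¹ := by
        rw [hw, ← one_div, one_div_div]
      rw [hinv]
      have : (((lam i j : ℝ) : ℂ) * w⁻¹).im = lam i j * w⁻¹.im := by
        simp [Complex.mul_im]
      rw [this, Complex.inv_im]
      have h1 : 0 < w.im := lt_of_lt_of_le hz hwim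
      have h2 : 0 < Complex.normSq w := Complex.normSq_pos.2 hwne
      have h4 : -w.im / Complex.normSq w ≤ 0 :=
        div_nonpos_of_nonpos_of_nonneg (by linarith) h2.le
      nlinarith [hnonpos i j]
    refine ⟨?_, hratio⟩
    by_cases hA : A = ∅
    · subst hA
      rw [mu_empty]
      simp
    · obtain ⟨i, hi⟩ := Finset.nonempty_iff_ne_empty.2 hA
      intro h0
      have := hratio i hi
      rw [h0, zero_div] at this
      simp only [Complex.zero_im] at this
      linarith

lemma mu_ne_zero (hsym : ∀ j k, lam j k = lam k j) (hnonpos : ∀ j k, lam j k ≤ 0)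
    (A : Finset (Fin n)) : mu r lam A ≠ 0 := by
  intro h0
  have := (HL (r := r) hsym hnonpos A Complex.I (by simp)).1
  rw [h0] at this
  simp at this

lemma rm_of_factor {p p1 : Polynomial ℝ} {θ : ℝ} {N : ℕ}
    (h : p = (X - C θ) ^ N * p1) (h1 : p1.eval θ ≠ 0) :
    p.rootMultiplicity θ = N := by
  have hp1 : p1 ≠ 0 := fun h0 => h1 (by rw [h0]; simp)
  have hX : ((X : Polynomial ℝ) - C θ) ^ N ≠ 0 := pow_ne_zero _ (X_sub_C_ne_zero θ)
  rw [h, Polynomial.rootMultiplicity_mul (mul_ne_zero hX hp1),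
    Polynomial.rootMultiplicity_X_sub_C_pow,
    Polynomial.rootMultiplicity_eq_zero (by simpa [Polynomial.IsRoot] using h1)]
  omega


lemma herglotz_order {p q : Polynomial ℝ} {θ : ℝ} {m m' : ℕ} {p1 q1 : Polynomial ℝ}
    (hp : p = (X - C θ) ^ m * p1) (hq : q = (X - C θ) ^ m' * q1)
    (hp1 : p1.eval θ ≠ 0) (hq1 : q1.eval θ ≠ 0)
    (H : ∀ z : ℂ, 0 < z.im → Polynomial.aeval z q ≠ 0 ∧
      0 < ((Polynomial.aeval z p) / (Polynomial.aeval z q)).im) :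
    m ≤ m' + 1 ∧ (m = m' + 1 → 0 < p1.eval θ * q1.eval θ) := by
  rcases le_or_gt m m' with hmm | hmm
  · exact ⟨by omega, fun h => by omega⟩
  set k := m - m' with hk
  have hkpos : 0 < k := by omega
  set c : ℝ := p1.eval θ / q1.eval θ with hc
  have hcne : c ≠ 0 := div_ne_zero hp1 hq1
  have key : ∀ w : ℂ, 0 < w.im → 0 ≤ (w ^ k).im * c := by
    intro w hw
    have hwne : w ≠ 0 := fun h => by simp [h] at hw
    -- pointwise positivity for t > 0
    have hpt : ∀ t : ℝ, 0 < t →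
        0 < (w ^ k * (Polynomial.aeval ((θ : ℂ) + t * w) p1 /
          Polynomial.aeval ((θ : ℂ) + t * w) q1)).im := by
      intro t ht
      set z : ℂ := (θ : ℂ) + t * w with hzdef
      have hzim : 0 < z.im := by
        simp only [hzdef, Complex.add_im, Complex.ofReal_im, Complex.mul_im,
          Complex.ofReal_re, Complex.ofReal_im, zero_add, zero_mul, add_zero]
        positivity
      obtain ⟨hq0, him⟩ := H z hzim
      have hsub : (z - (θ : ℂ)) = (t : ℂ) * w := by rw [hzdef]; ring
      have hap : Polynomial.aeval z p = ((t : ℂ) * w) ^ m * Polynomial.aeval z p1 := by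
        rw [hp, map_mul, map_pow, map_sub, Polynomial.aeval_X, Polynomial.aeval_C]
        rw [show (algebraMap ℝ ℂ) θ = (θ : ℂ) from rfl, hsub]
      have haq : Polynomial.aeval z q = ((t : ℂ) * w) ^ m' * Polynomial.aeval z q1 := by
        rw [hq, map_mul, map_pow, map_sub, Polynomial.aeval_X, Polynomial.aeval_C]
        rw [show (algebraMap ℝ ℂ) θ = (θ : ℂ) from rfl, hsub]
      have htw : ((t : ℂ) * w) ≠ 0 :=
        mul_ne_zero (by exact_mod_cast ne_of_gt ht) hwne
      have hq1z : Polynomial.aeval z q1 ≠ 0 := by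
        intro h0
        rw [haq, h0, mul_zero] at hq0
        exact hq0 rfl
      have hpow : ((t : ℂ) * w) ^ m = ((t : ℂ) * w) ^ m' * ((t : ℂ) * w) ^ k := by
        rw [← pow_add]
        congr 1
        omega
      have hratio : Polynomial.aeval z p / Polynomial.aeval z q
          = ((t : ℝ) ^ k : ℝ) * (w ^ k * (Polynomial.aeval z p1 / Polynomial.aeval z q1)) := by
        rw [hap, haq, hpow]
        rw [mul_assoc, mul_div_mul_left _ _ (pow_ne_zero _ htw)]
        rw [mul_pow]
        push_cast
        ring
      rw [hratio] at him
      have hmulim : ∀ (a : ℝ) (u : ℂ), ((a : ℂ) * u).im = a * u.im := by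
        intro a u
        simp [Complex.mul_im]
      rw [hmulim] at him
      have htk : 0 < (t : ℝ) ^ k := pow_pos ht k
      nlinarith
    -- limit as t → 0⁺
    have hcont1 : Filter.Tendsto (fun t : ℝ => Polynomial.aeval ((θ : ℂ) + t * w) p1)
        (nhds 0) (nhds (Polynomial.aeval ((θ : ℂ)) p1)) := by
      have h1 : Continuous fun t : ℝ => ((θ : ℂ) + t * w) := by continuity
      have := (Polynomial.continuous_aeval (R := ℝ) (A := ℂ) p1).comp h1
      have h2 := this.tendsto 0
      simpa [Function.comp_def] using h2
    have hcont2 : Filter.Tendsto (fun t : ℝ => Polynomial.aeval ((θ : ℂ) + t * w) q1)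
        (nhds 0) (nhds (Polynomial.aeval ((θ : ℂ)) q1)) := by
      have h1 : Continuous fun t : ℝ => ((θ : ℂ) + t * w) := by continuity
      have := (Polynomial.continuous_aeval (R := ℝ) (A := ℂ) q1).comp h1
      have h2 := this.tendsto 0
      simpa [Function.comp_def] using h2
    have haevθp : Polynomial.aeval ((θ : ℂ)) p1 = ((p1.eval θ : ℝ) : ℂ) := by
      rw [show ((θ : ℂ)) = algebraMap ℝ ℂ θ from rfl, Polynomial.aeval_algebraMap_apply]
      simp
    have haevθq : Polynomial.aeval ((θ : ℂ)) q1 = ((q1.eval θ : ℝ) : ℂ) := by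
      rw [show ((θ : ℂ)) = algebraMap ℝ ℂ θ from rfl, Polynomial.aeval_algebraMap_apply]
      simp
    have hq1c : Polynomial.aeval ((θ : ℂ)) q1 ≠ 0 := by
      rw [haevθq]
      exact_mod_cast hq1
    have hdivt : Filter.Tendsto (fun t : ℝ => (w ^ k * (Polynomial.aeval ((θ : ℂ) + t * w) p1 /
        Polynomial.aeval ((θ : ℂ) + t * w) q1)).im)
        (nhdsWithin 0 (Set.Ioi 0))
        (nhds ((w ^ k * (Polynomial.aeval ((θ : ℂ)) p1 / Polynomial.aeval ((θ : ℂ)) q1)).im)) := by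
      have := ((hcont1.div hcont2 hq1c).const_mul (w ^ k))
      exact (Complex.continuous_im.tendsto _).comp (this.mono_left nhdsWithin_le_nhds)
    have hfinal : 0 ≤ (w ^ k * (Polynomial.aeval ((θ : ℂ)) p1 /
        Polynomial.aeval ((θ : ℂ)) q1)).im := by
      refine ge_of_tendsto hdivt ?_
      filter_upwards [self_mem_nhdsWithin] with t ht
      exact (hpt t ht).le
    rw [haevθp, haevθq] at hfinal
    have : ((p1.eval θ : ℝ) : ℂ) / ((q1.eval θ : ℝ) : ℂ) = ((c : ℝ) : ℂ) := by
      rw [hc]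
      push_cast
      ring
    rw [this] at hfinal
    simpa [Complex.mul_im] using hfinal
  -- now exploit key
  have hkone : k = 1 := by
    by_contra hk1
    have hk2 : 2 ≤ k := by omega
    have hπ := Real.pi_pos
    have hk2' : (2:ℝ) ≤ (k:ℝ) := by exact_mod_cast hk2
    -- first witness
    have h1 : 0 ≤ c := by
      have hw : (0:ℝ) < (Complex.exp ((↑(Real.pi / (2 * k)) : ℂ) * Complex.I)).im := by
        rw [Complex.exp_ofReal_mul_I_im]
        apply Real.sin_pos_of_pos_of_lt_pi
        · positivity
        · rw [div_lt_iff₀ (by positivity)]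
          nlinarith
      have hkey := key _ hw
      rw [← Complex.exp_nat_mul] at hkey
      have : ((k : ℂ)) * ((↑(Real.pi / (2 * k)) : ℂ) * Complex.I)
          = (↑(Real.pi / 2) : ℂ) * Complex.I := by
        have hkc : (k : ℂ) ≠ 0 := Nat.cast_ne_zero.2 (by omega)
        push_cast
        field_simp
      rw [this, Complex.exp_ofReal_mul_I_im, Real.sin_pi_div_two] at hkey
      linarith
    -- second witness
    have h2 : c ≤ 0 := by
      have hw : (0:ℝ) < (Complex.exp ((↑(3 * Real.pi / (2 * k)) : ℂ) * Complex.I)).im := by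
        rw [Complex.exp_ofReal_mul_I_im]
        apply Real.sin_pos_of_pos_of_lt_pi
        · positivity
        · rw [div_lt_iff₀ (by positivity)]
          nlinarith
      have hkey := key _ hw
      rw [← Complex.exp_nat_mul] at hkey
      have heq : ((k : ℂ)) * ((↑(3 * Real.pi / (2 * k)) : ℂ) * Complex.I)
          = (↑(3 * Real.pi / 2) : ℂ) * Complex.I := by
        have hkc : (k : ℂ) ≠ 0 := Nat.cast_ne_zero.2 (by omega)
        push_cast
        field_simp
      rw [heq, Complex.exp_ofReal_mul_I_im] at hkey
      have hs : Real.sin (3 * Real.pi / 2) = -1 := by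
        have : 3 * Real.pi / 2 = Real.pi / 2 + Real.pi := by ring
        rw [this, Real.sin_add_pi, Real.sin_pi_div_two]
      rw [hs] at hkey
      linarith
    exact hcne (le_antisymm h2 h1)
  have hm : m = m' + 1 := by omega
  refine ⟨by omega, fun _ => ?_⟩
  have := key Complex.I (by simp)
  rw [hkone] at this
  simp only [pow_one, Complex.I_im] at this
  have hcpos : 0 < c := lt_of_le_of_ne (by linarith) (Ne.symm hcne)
  have hcpos' : 0 < p1.eval θ / q1.eval θ := by
    rw [← hc]
    exact hcpos
  rcases div_pos_iff.1 hcpos' with ⟨ha, hb⟩ | ⟨ha, hb⟩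
  · exact mul_pos ha hb
  · exact mul_pos_of_neg_of_neg ha hb

lemma rm_add {a b T : Polynomial ℝ} {θ : ℝ} {N : ℕ}
    (hbfact : b = (X - C θ) ^ N * T) (hT : T.eval θ ≠ 0)
    (ha : (X - C θ) ^ (N + 1) ∣ a) : (a + b).rootMultiplicity θ = N := by
  obtain ⟨a', ha'⟩ := ha
  have heq : a + b = (X - C θ) ^ N * ((X - C θ) * a' + T) := by
    rw [ha', hbfact, pow_succ]
    ring
  refine rm_of_factor heq ?_
  simpa using hT

theorem stmt_8' (n : ℕ) (r : Fin n → ℝ) (lam : Fin n → Fin n → ℝ)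
    (hsym : ∀ j k, lam j k = lam k j) (hnonpos : ∀ j k, lam j k ≤ 0)
    (i : Fin n) (θ : ℝ) :
    (mu r lam ((Finset.univ : Finset (Fin n)).erase i)).rootMultiplicity θ =
        (mu r lam Finset.univ).rootMultiplicity θ + 1 ↔
      ∃ j : Fin n, j ≠ i ∧ lam i j ≠ 0 ∧
        (mu r lam (Finset.univ.erase i)).rootMultiplicity θ =
          (mu r lam ((Finset.univ.erase i).erase j)).rootMultiplicity θ + 1 := by
  classical
  set A : Finset (Fin n) := Finset.univ with hA
  set Hs : Finset (Fin n) := A.erase i with hHs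
  have hiA : i ∈ A := Finset.mem_univ i
  have hrec := mu_rec (r := r) hsym hiA
  have hμH : mu r lam Hs ≠ 0 := mu_ne_zero hsym hnonpos Hs
  have hμA : mu r lam A ≠ 0 := mu_ne_zero hsym hnonpos A
  set m : ℕ := (mu r lam Hs).rootMultiplicity θ with hm
  obtain ⟨P1, hP1eq, hP1nd⟩ :=
    (mu r lam Hs).exists_eq_pow_rootMultiplicity_mul_and_not_dvd hμH θ
  have hP1θ : P1.eval θ ≠ 0 := fun h => hP1nd (Polynomial.dvd_iff_isRoot.2 h)
  have hfact : ∀ j : Fin n, ∃ (mj : ℕ) (Qj : Polynomial ℝ),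
      mu r lam (Hs.erase j) = (X - C θ) ^ mj * Qj ∧ Qj.eval θ ≠ 0 ∧
      mj = (mu r lam (Hs.erase j)).rootMultiplicity θ ∧
      (j ∈ Hs → (m ≤ mj + 1 ∧ (m = mj + 1 → 0 < P1.eval θ * Qj.eval θ))) := by
    intro j
    have hμj : mu r lam (Hs.erase j) ≠ 0 := mu_ne_zero hsym hnonpos _
    obtain ⟨Qj, hQeq, hQnd⟩ :=
      (mu r lam (Hs.erase j)).exists_eq_pow_rootMultiplicity_mul_and_not_dvd hμj θ
    have hQθ : Qj.eval θ ≠ 0 := fun h => hQnd (Polynomial.dvd_iff_isRoot.2 h)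
    refine ⟨_, Qj, hQeq, hQθ, rfl, fun hj => ?_⟩
    refine herglotz_order hP1eq hQeq hP1θ hQθ ?_
    intro z hz
    exact ⟨(HL (r := r) hsym hnonpos (Hs.erase j) z hz).1,
      lt_of_lt_of_le hz ((HL (r := r) hsym hnonpos Hs z hz).2 j hj)⟩
  choose mj Qj hQeq hQθ hmjrm hherg using hfact
  constructor
  · -- forward
    intro hforward
    have hnd : ¬ ((X - C θ) ^ m ∣ mu r lam A) := by
      intro hdvd
      have := (Polynomial.le_rootMultiplicity_iff hμA).2 hdvd
      omega
    have hd1 : (X - C θ) ^ m ∣ (X - C (r i)) * mu r lam Hs :=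
      Dvd.dvd.mul_left (Polynomial.pow_rootMultiplicity_dvd _ _) _
    have hdS : ¬ ((X - C θ) ^ m ∣ ∑ j ∈ Hs, C (lam i j) * mu r lam (Hs.erase j)) := by
      intro h
      apply hnd
      rw [hrec]
      exact dvd_add hd1 h
    obtain ⟨j, hj, hjnd⟩ : ∃ j ∈ Hs,
        ¬ ((X - C θ) ^ m ∣ C (lam i j) * mu r lam (Hs.erase j)) := by
      by_contra hall
      push_neg at hall
      exact hdS (Finset.dvd_sum hall)
    have hlamj : lam i j ≠ 0 := by
      intro h0
      apply hjnd
      rw [h0, map_zero, zero_mul]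
      exact dvd_zero _
    have hjd : ¬ ((X - C θ) ^ m ∣ mu r lam (Hs.erase j)) :=
      fun h => hjnd (Dvd.dvd.mul_left h _)
    have hmjlt : (mu r lam (Hs.erase j)).rootMultiplicity θ < m := by
      by_contra hge
      push_neg at hge
      exact hjd ((Polynomial.le_rootMultiplicity_iff
        (mu_ne_zero hsym hnonpos _)).1 hge)
    have hup := (hherg j hj).1
    rw [← hmjrm j] at hmjlt
    refine ⟨j, (Finset.mem_erase.1 hj).1, hlamj, ?_⟩
    rw [← hmjrm j] at *
    omega
  · -- backward
    rintro ⟨j0, hj0ne, hj0lam, hj0m⟩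
    have hj0 : j0 ∈ Hs := Finset.mem_erase.2 ⟨hj0ne, Finset.mem_univ _⟩
    have hmj0 : m = mj j0 + 1 := by rw [hmjrm j0]; exact hj0m
    set N : ℕ := m - 1 with hN
    have hmN : m = N + 1 := by omega
    have hmjN : ∀ j ∈ Hs, N ≤ mj j := fun j hj => by
      have := (hherg j hj).1
      omega
    set T : Polynomial ℝ :=
      ∑ j ∈ Hs, C (lam i j) * ((X - C θ) ^ (mj j - N) * Qj j) with hT
    have hSeq : (∑ j ∈ Hs, C (lam i j) * mu r lam (Hs.erase j))
        = (X - C θ) ^ N * T := by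
      rw [hT, Finset.mul_sum]
      refine Finset.sum_congr rfl fun j hj => ?_
      rw [hQeq j, show ((X : Polynomial ℝ) - C θ) ^ (mj j) =
        (X - C θ) ^ N * (X - C θ) ^ (mj j - N) by
          rw [← pow_add]
          congr 1
          have := hmjN j hj
          omega]
      ring
    have hTθ : T.eval θ * P1.eval θ < 0 := by
      have hTeval : T.eval θ = ∑ j ∈ Hs,
          lam i j * (((X - C θ) ^ (mj j - N)).eval θ * (Qj j).eval θ) := by
        rw [hT, Polynomial.eval_finset_sum]
        refine Finset.sum_congr rfl fun j hj => by simp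
      rw [hTeval, Finset.sum_mul]
      have hzero : ∑ j ∈ Hs, (0 : ℝ) = 0 := Finset.sum_const_zero
      rw [← hzero]
      refine Finset.sum_lt_sum (fun j hj => ?_) ⟨j0, hj0, ?_⟩
      · rcases eq_or_ne (lam i j) 0 with h0 | h0
        · simp [h0]
        · rcases eq_or_lt_of_le (hmjN j hj) with hNe | hNlt
          · have hmeq : m = mj j + 1 := by omega
            have hpos := (hherg j hj).2 hmeq
            rw [← hNe]
            simp only [Nat.sub_self, pow_zero, Polynomial.eval_one, one_mul]
            have hneg : lam i j < 0 := lt_of_le_of_ne (hnonpos i j) h0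
            nlinarith
          · have : ((X - C θ) ^ (mj j - N)).eval θ = 0 := by
              have hd : mj j - N ≠ 0 := by omega
              simp [Polynomial.eval_pow, zero_pow hd]
            rw [this]
            simp
      · have hNe : mj j0 = N := by omega
        have hpos := (hherg j0 hj0).2 hmj0
        rw [hNe]
        simp only [Nat.sub_self, pow_zero, Polynomial.eval_one, one_mul]
        have hneg : lam i j0 < 0 := lt_of_le_of_ne (hnonpos i j0) hj0lam
        nlinarith
    have hTne : T.eval θ ≠ 0 := by
      intro h0
      rw [h0, zero_mul] at hTθ
      exact lt_irrefl _ hTθ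
    have hd1 : (X - C θ) ^ (N + 1) ∣ (X - C (r i)) * mu r lam Hs := by
      refine Dvd.dvd.mul_left ?_ _
      rw [← hmN]
      exact Polynomial.pow_rootMultiplicity_dvd _ _
    have hArm : (mu r lam A).rootMultiplicity θ = N := by
      rw [hrec]
      exact rm_add hSeq hTne hd1
    rw [hArm]
    omega

end S8

/-- `m_θ(G∖i) = m_θ(G) + 1` iff some neighbor `j` of `i` satisfies
`m_θ(G∖{i,j}) = m_θ(G∖i) − 1`. -/
theorem stmt_8 (n : ℕ) (hn : 0 < n) (r : Fin n → ℝ) (lam : Fin n → Fin n → ℝ)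
    (hsym : ∀ j k, lam j k = lam k j) (hnonpos : ∀ j k, lam j k ≤ 0)
    (hdiag : ∀ i, lam i i = 0) (i : Fin n) (θ : ℝ) :
    (mu r lam ((Finset.univ : Finset (Fin n)).erase i)).rootMultiplicity θ =
        (mu r lam Finset.univ).rootMultiplicity θ + 1 ↔
      ∃ j : Fin n, j ≠ i ∧ lam i j ≠ 0 ∧
        (mu r lam (Finset.univ.erase i)).rootMultiplicity θ =
          (mu r lam ((Finset.univ.erase i).erase j)).rootMultiplicity θ + 1 := by
  exact S8.stmt_8' n r lam hsym hnonpos i θ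
end
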